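/- arXiv:1809.02684 — 10 statements merged into one kernel-verified Lean document; each statement's English description precedes it below -/
import Mathlib

section
/- If (α_1, α_2, ..., α_r) is a graceful permutation of {1, ..., r}, then the cyclic sequence (α_1, α_2, ..., α_r, α_r + r, α_{r-1} + r, ..., α_1 + r), with entries considered as elements of Z_{2r+1}, is a directed rotational terrace for Z_{2r+1}; that is, its entries are exactly the 2r nonzero elements of Z_{2r+1}, and the 2r cyclic consecutive differences (including the wrap-around difference from the last entry back to the first) are pairwise distinct. -/
/-- `α` (indexed by `0, …, r-1`) is a graceful permutation of length `r`. -/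
def IsGraceful (r : ℕ) (α : ℕ → ℤ) : Prop :=
  (Finset.range r).image α = Finset.Icc (1 : ℤ) (r : ℤ) ∧
  ∀ i j : ℕ, i + 1 < r → j + 1 < r → |α (i + 1) - α i| = |α (j + 1) - α j| → i = j

private lemma intCast_zmod_inj {n : ℕ} {x y : ℤ} (h : |x - y| < (n : ℤ))
    (he : ((x : ℤ) : ZMod n) = y) : x = y := by
  have h0 : ((x - y : ℤ) : ZMod n) = 0 := by push_cast; rw [he]; ring
  rw [ZMod.intCast_zmod_eq_zero_iff_dvd] at h0
  have := Int.eq_zero_of_abs_lt_dvd h0 h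
  omega

/-- integer representative of the terrace entry -/
private def Aa (r : ℕ) (α : ℕ → ℤ) (j : ℕ) : ℤ :=
  if j < r then α j else α (2 * r - 1 - j) + r

/-- integer representative of the cyclic difference -/
private def Dd (r : ℕ) (α : ℕ → ℤ) (i : ℕ) : ℤ :=
  if i + 1 < r then α (i + 1) - α i
  else if i + 1 = r then (r : ℤ)
  else if i + 1 < 2 * r then α (2 * r - 2 - i) - α (2 * r - 1 - i)
  else -(r : ℤ)

/-- From a graceful permutation `(α_1, …, α_r)`, the cyclic sequence
`(α_1, …, α_r, α_r + r, …, α_1 + r)` in `ZMod (2r+1)` is a directed rotational terrace: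
its entries are exactly the nonzero elements, and the cyclic consecutive differences
are pairwise distinct. -/
theorem graceful_gives_rotational_terrace (r : ℕ) (hr : 1 ≤ r) (α : ℕ → ℤ)
    (hα : IsGraceful r α)
    (a : ℕ → ZMod (2 * r + 1))
    (ha : ∀ j < 2 * r, a j = if j < r then ((α j : ℤ) : ZMod (2 * r + 1))
      else ((α (2 * r - 1 - j) + r : ℤ) : ZMod (2 * r + 1))) :
    (Finset.range (2 * r)).image a = Finset.univ.erase (0 : ZMod (2 * r + 1)) ∧
    ∀ i < 2 * r, ∀ j < 2 * r,
      a ((i + 1) % (2 * r)) - a i = a ((j + 1) % (2 * r)) - a j → i = j := by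
  obtain ⟨him, huniq⟩ := hα
  haveI : NeZero (2 * r + 1) := ⟨by omega⟩
  -- values of α lie in [1, r]
  have hmem : ∀ i < r, 1 ≤ α i ∧ α i ≤ (r : ℤ) := by
    intro i hi
    have : α i ∈ (Finset.range r).image α :=
      Finset.mem_image_of_mem α (Finset.mem_range.mpr hi)
    rw [him, Finset.mem_Icc] at this
    exact this
  -- α is injective on [0, r)
  have hinj : ∀ i < r, ∀ j < r, α i = α j → i = j := by
    have hcard : ((Finset.range r).image α).card = (Finset.range r).card := by
      rw [him, Int.card_Icc, Finset.card_range]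
      omega
    have := Finset.card_image_iff.mp hcard
    intro i hi j hj hije
    exact this (by simpa using hi) (by simpa using hj) hije
  -- the entries are casts of Aa
  have hA : ∀ j < 2 * r, a j = ((Aa r α j : ℤ) : ZMod (2 * r + 1)) := by
    intro j hj
    rw [ha j hj, Aa]
    split_ifs <;> rfl
  have hAmem : ∀ j < 2 * r, 1 ≤ Aa r α j ∧ Aa r α j ≤ 2 * (r : ℤ) := by
    intro j hj
    rw [Aa]
    split_ifs with h
    · have := hmem j h
      constructor <;> linarith
    · have h1 : 2 * r - 1 - j < r := by omega
      have := hmem _ h1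
      constructor <;> linarith
  have hAinj : ∀ i < 2 * r, ∀ j < 2 * r, Aa r α i = Aa r α j → i = j := by
    intro i hi j hj he
    rw [Aa, Aa] at he
    split_ifs at he with h1 h2 h2
    · exact hinj i h1 j h2 he
    · have := hmem i h1
      have := hmem _ (show 2 * r - 1 - j < r by omega)
      linarith [this.1]
    · have := hmem j h2
      have := hmem _ (show 2 * r - 1 - i < r by omega)
      linarith [this.1]
    · have he' : α (2 * r - 1 - i) = α (2 * r - 1 - j) := by linarith
      have := hinj _ (show 2 * r - 1 - i < r by omega) _ (show 2 * r - 1 - j < r by omega) he'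
      omega
  -- Part 1
  have part1 : (Finset.range (2 * r)).image a = Finset.univ.erase (0 : ZMod (2 * r + 1)) := by
    apply Finset.eq_of_subset_of_card_le
    · intro x hx
      rw [Finset.mem_image] at hx
      obtain ⟨j, hj, rfl⟩ := hx
      rw [Finset.mem_range] at hj
      rw [Finset.mem_erase]
      refine ⟨?_, Finset.mem_univ _⟩
      rw [hA j hj]
      intro h0
      rw [ZMod.intCast_zmod_eq_zero_iff_dvd] at h0
      have hb := hAmem j hj
      have := Int.le_of_dvd (by linarith) h0
      push_cast at this
      linarith
    · have h1 : (Finset.univ.erase (0 : ZMod (2 * r + 1))).card = 2 * r := by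
        rw [Finset.card_erase_of_mem (Finset.mem_univ _), Finset.card_univ, ZMod.card]
        omega
      have h2 : ((Finset.range (2 * r)).image a).card = 2 * r := by
        rw [Finset.card_image_iff.mpr, Finset.card_range]
        intro i hi j hj he
        simp only [Finset.coe_range, Set.mem_Iio] at hi hj
        rw [hA i hi, hA j hj] at he
        have hbi := hAmem i hi
        have hbj := hAmem j hj
        have := intCast_zmod_inj (n := 2 * r + 1) (by rw [abs_sub_lt_iff]; push_cast; constructor <;> linarith) he
        exact hAinj i hi j hj this
      rw [h1, h2]
  refine ⟨part1, ?_⟩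
  -- differences are casts of Dd
  have hD : ∀ i < 2 * r, a ((i + 1) % (2 * r)) - a i = ((Dd r α i : ℤ) : ZMod (2 * r + 1)) := by
    intro i hi
    rw [Dd]
    split_ifs with h1 h2 h3
    · rw [Nat.mod_eq_of_lt (by omega), ha (i+1) (by omega), ha i (by omega),
        if_pos h1, if_pos (by omega)]
      push_cast; ring
    · have e1 : 2 * r - 1 - (i + 1) = i := by omega
      rw [Nat.mod_eq_of_lt (by omega), ha (i+1) (by omega), ha i (by omega),
        if_neg (by omega), if_pos (by omega), e1]
      push_cast; ring
    · have e1 : 2 * r - 1 - (i + 1) = 2 * r - 2 - i := by omega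
      rw [Nat.mod_eq_of_lt (by omega), ha (i+1) (by omega), ha i (by omega),
        if_neg (by omega), if_neg (by omega), e1]
      push_cast; ring
    · have e0 : (i + 1) % (2 * r) = 0 := by
        have : i + 1 = 2 * r := by omega
        simp [this]
      have e1 : 2 * r - 1 - i = 0 := by omega
      rw [e0, ha 0 (by omega), ha i (by omega), if_pos (by omega), if_neg (by omega), e1]
      push_cast; ring
  -- bounds on differences for the "graceful" branch
  have hd1 : ∀ k, k + 1 < r → (1 ≤ |α (k + 1) - α k| ∧ |α (k + 1) - α k| ≤ (r : ℤ) - 1) := by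
    intro k hk
    have h1 := hmem (k + 1) (by omega)
    have h2 := hmem k (by omega)
    have hne : α (k + 1) ≠ α k := fun he => by
      have := hinj (k + 1) (by omega) k (by omega) he; omega
    rw [abs_le]
    constructor
    · rcases lt_or_gt_of_ne (sub_ne_zero.mpr hne) with h | h
      · rw [abs_of_neg h]; omega
      · rw [abs_of_pos h]; omega
    · constructor <;> linarith
  have hDbound : ∀ i < 2 * r, |Dd r α i| ≤ (r : ℤ) := by
    intro i hi
    rw [Dd]
    split_ifs with h1 h2 h3
    · have := hd1 i h1; linarith [this.2]
    · rw [abs_of_nonneg (by positivity)]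
    · have e1 : 2 * r - 1 - i = (2 * r - 2 - i) + 1 := by omega
      have := (hd1 (2 * r - 2 - i) (by omega)).2
      rw [e1, abs_sub_comm]
      linarith
    · rw [abs_neg, abs_of_nonneg (by positivity)]
  -- value of Dd on each branch
  have hDa : ∀ i, i + 1 < r → Dd r α i = α (i + 1) - α i := by
    intro i h; rw [Dd, if_pos h]
  have hDb : ∀ i, i + 1 = r → Dd r α i = (r : ℤ) := by
    intro i h; rw [Dd, if_neg (by omega), if_pos h]
  have hDc : ∀ i, r ≤ i → i + 1 < 2 * r →
      Dd r α i = -(α (2 * r - 2 - i + 1) - α (2 * r - 2 - i)) := by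
    intro i h h'
    rw [Dd, if_neg (by omega), if_neg (by omega), if_pos h']
    have e1 : 2 * r - 2 - i + 1 = 2 * r - 1 - i := by omega
    rw [e1]; ring
  have hDd : ∀ i, i + 1 = 2 * r → Dd r α i = -(r : ℤ) := by
    intro i h; rw [Dd, if_neg (by omega), if_neg (by omega), if_neg (by omega)]
  -- a difference value on the graceful branch can't be ±r
  have hnotr : ∀ k, k + 1 < r → α (k + 1) - α k ≠ (r : ℤ) ∧ α (k + 1) - α k ≠ -(r : ℤ) := by
    intro k hk
    have h2 := (hd1 k hk).2
    rw [abs_le] at h2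
    constructor <;> intro h <;> rw [h] at h2 <;>
      · have : (1 : ℤ) ≤ (r : ℤ) := by exact_mod_cast hr
        omega
  have hne0 : ∀ k, k + 1 < r → α (k + 1) - α k ≠ 0 := by
    intro k hk h
    have := (hd1 k hk).1
    rw [h, abs_zero] at this
    omega
  -- Dd is injective on [0, 2r)
  have hDinj : ∀ i < 2 * r, ∀ j < 2 * r, Dd r α i = Dd r α j → i = j := by
    have hrz : (1 : ℤ) ≤ (r : ℤ) := by exact_mod_cast hr
    intro i hi j hj he
    have hci : i + 1 < r ∨ i + 1 = r ∨ (r ≤ i ∧ i + 1 < 2 * r) ∨ i + 1 = 2 * r := by omega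
    have hcj : j + 1 < r ∨ j + 1 = r ∨ (r ≤ j ∧ j + 1 < 2 * r) ∨ j + 1 = 2 * r := by omega
    rcases hci with hci | hci | ⟨hci, hci'⟩ | hci <;>
      rcases hcj with hcj | hcj | ⟨hcj, hcj'⟩ | hcj
    · rw [hDa i hci, hDa j hcj] at he
      exact huniq i j hci hcj (by rw [he])
    · rw [hDa i hci, hDb j hcj] at he
      exact absurd he (hnotr i hci).1
    · rw [hDa i hci, hDc j hcj hcj'] at he
      have hk : 2 * r - 2 - j + 1 < r := by omega
      have hij : i = 2 * r - 2 - j := by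
        apply huniq i _ hci hk
        rw [he, abs_neg]
      rw [← hij] at he
      exact absurd (by linarith : α (i + 1) - α i = 0) (hne0 i hci)
    · rw [hDa i hci, hDd j hcj] at he
      exact absurd he (hnotr i hci).2
    · rw [hDb i hci, hDa j hcj] at he
      exact absurd he.symm (hnotr j hcj).1
    · omega
    · rw [hDb i hci, hDc j hcj hcj'] at he
      have hk : 2 * r - 2 - j + 1 < r := by omega
      exact absurd (by linarith) (hnotr _ hk).2
    · rw [hDb i hci, hDd j hcj] at he
      omega
    · rw [hDc i hci hci', hDa j hcj] at he
      have hk : 2 * r - 2 - i + 1 < r := by omega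
      have hij : 2 * r - 2 - i = j := by
        apply huniq _ j hk hcj
        rw [← he, abs_neg]
      rw [hij] at he
      exact absurd (by linarith : α (j + 1) - α j = 0) (hne0 j hcj)
    · rw [hDc i hci hci', hDb j hcj] at he
      have hk : 2 * r - 2 - i + 1 < r := by omega
      exact absurd (by linarith) (hnotr _ hk).2
    · rw [hDc i hci hci', hDc j hcj hcj'] at he
      have := huniq (2 * r - 2 - i) (2 * r - 2 - j) (by omega) (by omega) (by rw [show α (2*r-2-i+1) - α (2*r-2-i) = α (2*r-2-j+1) - α (2*r-2-j) by linarith])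
      omega
    · rw [hDc i hci hci', hDd j hcj] at he
      have hk : 2 * r - 2 - i + 1 < r := by omega
      exact absurd (by linarith) (hnotr _ hk).1
    · rw [hDd i hci, hDa j hcj] at he
      exact absurd he.symm (hnotr j hcj).2
    · rw [hDd i hci, hDb j hcj] at he
      omega
    · rw [hDd i hci, hDc j hcj hcj'] at he
      have hk : 2 * r - 2 - j + 1 < r := by omega
      exact absurd (by linarith) (hnotr _ hk).1
    · omega
  intro i hi j hj he
  rw [hD i hi, hD j hj] at he
  have hbi := hDbound i hi
  have hbj := hDbound j hj
  rw [abs_le] at hbi hbj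
  have := intCast_zmod_inj (n := 2 * r + 1)
    (by rw [abs_sub_lt_iff]; push_cast; constructor <;> linarith) he
  exact hDinj i hi j hj this
end

section
/- For every r ≥ 1, the cyclic group Z_{2r+1} admits a rotational sequencing. -/
/-- values of the rotational sequencing, as integers -/
def rsf (r i : ℕ) : ℤ :=
  if i < r then
    if i % 2 = 0 then -4 - 4 * ((i / 2 : ℕ) : ℤ) else 2 + 4 * ((i / 2 : ℕ) : ℤ)
  else
    if r % 2 = 0 then
      if (i - r) % 2 = 0 then -1 - 4 * (((i - r) / 2 : ℕ) : ℤ)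
      else 3 + 4 * (((i - r) / 2 : ℕ) : ℤ)
    else
      if (i - r) % 2 = 0 then 1 + 4 * (((i - r) / 2 : ℕ) : ℤ)
      else -3 - 4 * (((i - r) / 2 : ℕ) : ℤ)

/-- differences of the rotational sequencing, as integers -/
def rsg (r i : ℕ) : ℤ :=
  if i + 1 = 2 * r then -3 - 2 * (r : ℤ)
  else if i + 1 = r then (if r % 2 = 0 then 1 - 2 * (r : ℤ) else 3 + 2 * (r : ℤ))
  else if i < r then (if i % 2 = 0 then 6 + 4 * (i : ℤ) else -6 - 4 * (i : ℤ))
  else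
    if r % 2 = 0 then
      (if (i - r) % 2 = 0 then 4 + 4 * ((i - r : ℕ) : ℤ) else -4 - 4 * ((i - r : ℕ) : ℤ))
    else
      (if (i - r) % 2 = 0 then -4 - 4 * ((i - r : ℕ) : ℤ) else 4 + 4 * ((i - r : ℕ) : ℤ))

lemma cases_of_dvd (m e : ℤ) (hm : 0 < m) (h : m ∣ e) (hlb : -6 * m < e) (hub : e < 6 * m) :
    e = -5 * m ∨ e = -4 * m ∨ e = -3 * m ∨ e = -2 * m ∨ e = -m ∨ e = 0 ∨
      e = m ∨ e = 2 * m ∨ e = 3 * m ∨ e = 4 * m ∨ e = 5 * m := by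
  obtain ⟨c, rfl⟩ := h
  have h1 : c < 6 := by
    by_contra hc
    push_neg at hc
    have : m * 6 ≤ m * c := mul_le_mul_of_nonneg_left hc hm.le
    linarith
  have h2 : -6 < c := by
    by_contra hc
    push_neg at hc
    have : m * c ≤ m * (-6) := mul_le_mul_of_nonneg_left hc hm.le
    linarith
  interval_cases c <;> omega

lemma dvd_of_zmod_eq (r : ℕ) (x y : ℤ) (h : ((x : ℤ) : ZMod (2 * r + 1)) = ((y : ℤ) : ZMod (2 * r + 1))) :
    (2 * (r : ℤ) + 1) ∣ y - x := by
  have h1 := ((ZMod.intCast_eq_intCast_iff _ _ _).mp h).dvd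
  have h2 : ((2 * r + 1 : ℕ) : ℤ) = 2 * (r : ℤ) + 1 := by push_cast; ring
  rwa [h2] at h1

lemma rsf_ne (r i : ℕ) (hr : 1 ≤ r) (hi : i < 2 * r)
    (h : (2 * (r : ℤ) + 1) ∣ rsf r i) : False := by
  unfold rsf at h
  split_ifs at h <;>
    (rcases cases_of_dvd _ _ (by omega) h (by omega) (by omega) with
      h' | h' | h' | h' | h' | h' | h' | h' | h' | h' | h' <;> omega)

set_option maxHeartbeats 1000000 in
lemma rsf_inj (r : ℕ) (hr : 1 ≤ r) {i j : ℕ} (hi : i < 2 * r) (hj : j < 2 * r)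
    (h : (2 * (r : ℤ) + 1) ∣ rsf r j - rsf r i) : i = j := by
  unfold rsf at h
  split_ifs at h <;>
    (rcases cases_of_dvd _ _ (by omega) h (by omega) (by omega) with
      h' | h' | h' | h' | h' | h' | h' | h' | h' | h' | h' <;> omega)

set_option maxHeartbeats 2000000 in
lemma rsg_inj (r : ℕ) (hr : 1 ≤ r) {i j : ℕ} (hi : i < 2 * r) (hj : j < 2 * r)
    (h : (2 * (r : ℤ) + 1) ∣ rsg r j - rsg r i) : i = j := by
  unfold rsg at h
  split_ifs at h <;>
    (rcases cases_of_dvd _ _ (by omega) h (by omega) (by omega) with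
      h' | h' | h' | h' | h' | h' | h' | h' | h' | h' | h' <;> omega)

set_option maxHeartbeats 1000000 in
lemma rsf_diff (r i : ℕ) (hr : 1 ≤ r) (hi : i < 2 * r) :
    rsf r ((i + 1) % (2 * r)) - rsf r i = rsg r i := by
  have hmod : (i + 1) % (2 * r) = if i + 1 = 2 * r then 0 else i + 1 := by
    split_ifs with h
    · rw [h, Nat.mod_self]
    · exact Nat.mod_eq_of_lt (by omega)
  rw [hmod]
  unfold rsf rsg
  split_ifs <;> omega

/-- `Z_{2r+1}` admits a rotational sequencing: there is a cyclic arrangement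
`(a 0, …, a (2r-1))` of the nonzero elements of `ZMod (2r+1)` whose cyclic consecutive
differences are pairwise distinct. -/
theorem exists_rotational_sequencing (r : ℕ) (hr : 1 ≤ r) :
    ∃ a : ℕ → ZMod (2 * r + 1),
      (Finset.range (2 * r)).image a = Finset.univ.erase (0 : ZMod (2 * r + 1)) ∧
      ∀ i < 2 * r, ∀ j < 2 * r,
        a ((i + 1) % (2 * r)) - a i = a ((j + 1) % (2 * r)) - a j → i = j := by
  haveI : NeZero (2 * r + 1) := ⟨by omega⟩
  refine ⟨fun i => ((rsf r i : ℤ) : ZMod (2 * r + 1)), ?_, ?_⟩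
  · -- image statement
    have hinj : Set.InjOn (fun i => ((rsf r i : ℤ) : ZMod (2 * r + 1)))
        (Finset.range (2 * r) : Finset ℕ) := by
      intro i hi j hj h
      simp only [Finset.coe_range, Set.mem_Iio] at hi hj
      exact rsf_inj r hr hi hj (dvd_of_zmod_eq r _ _ h)
    have hcard : ((Finset.range (2 * r)).image
        (fun i => ((rsf r i : ℤ) : ZMod (2 * r + 1)))).card = 2 * r := by
      rw [Finset.card_image_of_injOn hinj, Finset.card_range]
    have hsub : (Finset.range (2 * r)).image
        (fun i => ((rsf r i : ℤ) : ZMod (2 * r + 1))) ⊆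
        Finset.univ.erase (0 : ZMod (2 * r + 1)) := by
      intro x hx
      simp only [Finset.mem_image, Finset.mem_range] at hx
      obtain ⟨i, hi, rfl⟩ := hx
      refine Finset.mem_erase.mpr ⟨?_, Finset.mem_univ _⟩
      intro h0
      have hdvd : ((2 * r + 1 : ℕ) : ℤ) ∣ rsf r i :=
        (ZMod.intCast_zmod_eq_zero_iff_dvd _ _).mp h0
      have hdvd' : (2 * (r : ℤ) + 1) ∣ rsf r i := by
        push_cast at hdvd; exact hdvd
      exact rsf_ne r i hr hi hdvd'
    have hcard2 : (Finset.univ.erase (0 : ZMod (2 * r + 1))).card ≤ 2 * r := by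
      rw [Finset.card_erase_of_mem (Finset.mem_univ _), Finset.card_univ, ZMod.card]
      omega
    exact Finset.eq_of_subset_of_card_le hsub (by omega)
  · -- differences pairwise distinct
    intro i hi j hj h
    simp only at h
    have hdi : ((rsf r ((i + 1) % (2 * r)) : ℤ) : ZMod (2 * r + 1)) -
        ((rsf r i : ℤ) : ZMod (2 * r + 1)) = ((rsg r i : ℤ) : ZMod (2 * r + 1)) := by
      rw [← Int.cast_sub, rsf_diff r i hr hi]
    have hdj : ((rsf r ((j + 1) % (2 * r)) : ℤ) : ZMod (2 * r + 1)) -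
        ((rsf r j : ℤ) : ZMod (2 * r + 1)) = ((rsg r j : ℤ) : ZMod (2 * r + 1)) := by
      rw [← Int.cast_sub, rsf_diff r j hr hj]
    rw [hdi, hdj] at h
    exact rsg_inj r hr hi hj (dvd_of_zmod_eq r _ _ h)
end

section
/- Let n be odd and let x be any nonzero element of Z_n. Then the n-2 elements of Z_n \ {0, x} can be ordered (a_1, ..., a_{n-2}) so that the partial sums s_1, ..., s_{n-2} are pairwise distinct and all nonzero. -/
/-- Vertex sequence of an R-sequencing of `Z_n`, `n = 2k+1`, as integers in `[-k,k]`.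
Odd positions: `1,2,...,k`; even positions: `0,-1,-2,...,-k` skipping `-c`. -/
def Vf (c j : ℕ) : ℤ :=
  if j % 2 = 1 then (((j+1)/2 : ℕ) : ℤ)
  else if j / 2 < c then -((j/2 : ℕ) : ℤ) else -((j/2 : ℕ) : ℤ) - 1

/-- Cyclic difference sequence of the R-sequencing. -/
def Df (k c j : ℕ) : ℤ :=
  if j % 2 = 0 then (if j / 2 < c then (j : ℤ) + 1 else (j : ℤ) + 2)
  else if j = 2*k - 1 then -(k : ℤ)
  else if (j+1) / 2 < c then -(j : ℤ) - 1 else -(j : ℤ) - 2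

lemma aux_int_eq_zero {n : ℕ} {e : ℤ} (hd : (n:ℤ) ∣ e) (hb : |e| < n) : e = 0 := by
  rcases eq_or_ne e 0 with h | h
  · exact h
  · have h1 : (n:ℤ) ≤ |e| := Int.le_of_dvd (abs_pos.mpr h) ((dvd_abs _ _).mpr hd)
    omega

lemma aux_dvd_cases {n : ℕ} {e : ℤ} (hn : 0 < n) (hd : (n:ℤ) ∣ e) (hb : |e| < 2*n) :
    e = 0 ∨ e = n ∨ e = -(n:ℤ) := by
  obtain ⟨m, rfl⟩ := hd
  have hn' : (0:ℤ) < n := by exact_mod_cast hn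
  have h1 : |m| < 2 := by
    rw [abs_mul, abs_of_pos hn'] at hb
    nlinarith [abs_nonneg m]
  obtain ⟨hl, hr⟩ := abs_lt.mp h1
  interval_cases m
  · right; right; ring
  · left; ring
  · right; left; ring

lemma modsmall (m M : ℕ) (hM : 0 < M) (h : m < 2*M) :
    m % M = if m < M then m else m - M := by
  split_ifs with h1
  · exact Nat.mod_eq_of_lt h1
  · rw [Nat.mod_eq_sub_mod (le_of_not_gt h1)]
    exact Nat.mod_eq_of_lt (by omega)

section construction

variable (n k c : ℕ)

lemma Vf_bound (hk : 1 ≤ k) (hc : c = (k+1)/2) (j : ℕ) (hj : j < 2*k) :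
    -(k:ℤ) ≤ Vf c j ∧ Vf c j ≤ k := by
  unfold Vf; split_ifs <;> constructor <;> omega

lemma Vf_inj (hk : 1 ≤ k) (hc : c = (k+1)/2) (p q : ℕ) (hp : p < 2*k) (hq : q < 2*k)
    (h : Vf c p = Vf c q) : p = q := by
  unfold Vf at h; split_ifs at h <;> omega

lemma Vf_zero (hk : 1 ≤ k) (hc : c = (k+1)/2) : Vf c 0 = 0 := by
  unfold Vf; split_ifs <;> omega

lemma Df_eq (hk : 1 ≤ k) (hc : c = (k+1)/2) (j : ℕ) (hj : j < 2*k - 1) :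
    Df k c j = Vf c (j+1) - Vf c j := by
  unfold Df Vf; split_ifs <;> omega

lemma Df_last (hk : 1 ≤ k) (hc : c = (k+1)/2) :
    Df k c (2*k-1) = -(Vf c (2*k-1)) := by
  unfold Df Vf; split_ifs <;> omega

lemma Df_bound (hk : 1 ≤ k) (hc : c = (k+1)/2) (j : ℕ) (hj : j < 2*k) :
    Df k c j ≠ 0 ∧ -(2*(k:ℤ)) ≤ Df k c j ∧ Df k c j ≤ 2*(k:ℤ) := by
  unfold Df; split_ifs <;> refine ⟨by omega, by omega, by omega⟩

lemma Df_key (hk : 1 ≤ k) (hc : c = (k+1)/2) (p q : ℕ) (hp : p < 2*k) (hq : q < 2*k)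
    (hne : p ≠ q) :
    Df k c p - Df k c q ≠ 0 ∧ Df k c p - Df k c q ≠ 2*(k:ℤ)+1 ∧
      Df k c p - Df k c q ≠ -(2*(k:ℤ)+1) := by
  unfold Df; split_ifs <;> refine ⟨by omega, by omega, by omega⟩

/-- vertices as elements of `ZMod n`, extended periodically. -/
def wf (j : ℕ) : ZMod n := ((Vf c (j % (2*k)) : ℤ) : ZMod n)

variable {n k c}

lemma wf_mod (j : ℕ) : wf n k c (j % (2*k)) = wf n k c j := by
  unfold wf; rw [Nat.mod_mod_of_dvd _ dvd_rfl]

lemma wf_inj (hn : n = 2*k+1) (hk : 1 ≤ k) (hc : c = (k+1)/2) (p q : ℕ)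
    (h : wf n k c p = wf n k c q) : p % (2*k) = q % (2*k) := by
  have h2k : 0 < 2*k := by omega
  have hP : p % (2*k) < 2*k := Nat.mod_lt _ h2k
  have hQ : q % (2*k) < 2*k := Nat.mod_lt _ h2k
  unfold wf at h
  have hd : (n:ℤ) ∣ (Vf c (q % (2*k)) - Vf c (p % (2*k))) :=
    Int.ModEq.dvd ((ZMod.intCast_eq_intCast_iff _ _ _).mp h)
  have b1 := Vf_bound k c hk hc _ hP
  have b2 := Vf_bound k c hk hc _ hQ
  have h0 : Vf c (q % (2*k)) - Vf c (p % (2*k)) = 0 := by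
    apply aux_int_eq_zero hd
    rw [abs_lt]; omega
  exact Vf_inj k c hk hc _ _ hP hQ (by omega)

lemma Df_w (hn : n = 2*k+1) (hk : 1 ≤ k) (hc : c = (k+1)/2) (j : ℕ) (hj : j < 2*k) :
    ((Df k c j : ℤ) : ZMod n) = wf n k c (j+1) - wf n k c j := by
  have hj' : j % (2*k) = j := Nat.mod_eq_of_lt hj
  rcases eq_or_ne j (2*k-1) with hlast | hlast
  · have h1 : (j+1) % (2*k) = 0 := by
      rw [hlast]; have : 2*k-1+1 = 2*k := by omega
      rw [this, Nat.mod_self]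
    unfold wf
    rw [h1, hj', Vf_zero k c hk hc, hlast, Df_last k c hk hc]
    push_cast; ring
  · have h1 : (j+1) % (2*k) = j+1 := Nat.mod_eq_of_lt (by omega)
    unfold wf
    rw [h1, hj', Df_eq k c hk hc j (by omega)]
    push_cast; ring

lemma Df_modinj (hn : n = 2*k+1) (hk : 1 ≤ k) (hc : c = (k+1)/2) (p q : ℕ)
    (hp : p < 2*k) (hq : q < 2*k)
    (h : ((Df k c p : ℤ) : ZMod n) = ((Df k c q : ℤ) : ZMod n)) : p = q := by
  by_contra hne
  have hd : (n:ℤ) ∣ (Df k c q - Df k c p) :=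
    Int.ModEq.dvd ((ZMod.intCast_eq_intCast_iff _ _ _).mp h)
  have b1 := Df_bound k c hk hc _ hp
  have b2 := Df_bound k c hk hc _ hq
  have hcases := aux_dvd_cases (n := n) (by omega) hd (by rw [abs_lt]; omega)
  have hkey := Df_key k c hk hc q p hq hp (Ne.symm hne)
  have hncast : (n:ℤ) = 2*(k:ℤ)+1 := by rw [hn]; push_cast; ring
  rcases hcases with h0 | h0 | h0 <;> rw [hncast] at * <;> tauto

lemma Df_nonzero_mod (hn : n = 2*k+1) (hk : 1 ≤ k) (hc : c = (k+1)/2) (j : ℕ)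
    (hj : j < 2*k) : ((Df k c j : ℤ) : ZMod n) ≠ 0 := by
  intro h
  have : NeZero n := ⟨by omega⟩
  have hd : (n:ℤ) ∣ Df k c j := (ZMod.intCast_zmod_eq_zero_iff_dvd _ _).mp h
  have b := Df_bound k c hk hc _ hj
  have := aux_int_eq_zero hd (by rw [abs_lt]; omega)
  omega

end construction

/-- For odd `n` and nonzero `x`, the elements of `Z_n \ {0, x}` can be ordered so that the
partial sums `s_1, …, s_{n-2}` are pairwise distinct and nonzero. -/
theorem order_remove_one (n : ℕ) [NeZero n] (hn : 3 ≤ n) (hodd : Odd n)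
    (x : ZMod n) (hx : x ≠ 0) :
    ∃ a : ℕ → ZMod n,
      (Finset.range (n - 2)).image a = (Finset.univ.erase (0 : ZMod n)).erase x ∧
      (∀ j, 1 ≤ j → j ≤ n - 2 → ∑ i ∈ Finset.range j, a i ≠ 0) ∧
      (∀ j k, 1 ≤ j → j ≤ n - 2 → 1 ≤ k → k ≤ n - 2 →
        ∑ i ∈ Finset.range j, a i = ∑ i ∈ Finset.range k, a i → j = k) := by
  have hn2 : n % 2 = 1 := Nat.odd_iff.mp hodd
  obtain ⟨k, hk⟩ : ∃ k, n = 2*k+1 := ⟨n/2, by omega⟩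
  have hk1 : 1 ≤ k := by omega
  have h2k : 0 < 2*k := by omega
  set c := (k+1)/2 with hc
  -- the image of Df is all of univ \ {0}
  set F := (Finset.range (2*k)).image (fun j => ((Df k c j : ℤ) : ZMod n)) with hF
  have hFcard : F.card = 2*k := by
    rw [hF, Finset.card_image_of_injOn, Finset.card_range]
    intro p hp q hq h
    exact Df_modinj hk hk1 hc p q (Finset.mem_range.mp hp) (Finset.mem_range.mp hq) h
  have hFsub : F ⊆ Finset.univ.erase 0 := by
    intro y hy
    obtain ⟨j, hj, rfl⟩ := Finset.mem_image.mp hy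
    exact Finset.mem_erase.mpr
      ⟨Df_nonzero_mod hk hk1 hc j (Finset.mem_range.mp hj), Finset.mem_univ _⟩
  have hucard : (Finset.univ.erase (0 : ZMod n)).card = 2*k := by
    rw [Finset.card_erase_of_mem (Finset.mem_univ _), Finset.card_univ, ZMod.card]
    omega
  have hFeq : F = Finset.univ.erase 0 :=
    Finset.eq_of_subset_of_card_le hFsub (by rw [hucard, hFcard])
  have hxF : x ∈ F := by
    rw [hFeq]; exact Finset.mem_erase.mpr ⟨hx, Finset.mem_univ _⟩
  obtain ⟨j0, hj0r, hj0⟩ := Finset.mem_image.mp hxF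
  have hj0lt : j0 < 2*k := Finset.mem_range.mp hj0r
  set r := j0 + 1 with hr
  have hrle : r ≤ 2*k := by omega
  set a : ℕ → ZMod n := fun i => wf n k c (r+i+1) - wf n k c (r+i) with ha
  have hmi : ∀ i : ℕ, (r+i) % (2*k) < 2*k := fun i => Nat.mod_lt _ h2k
  have haDf : ∀ i : ℕ, a i = ((Df k c ((r+i) % (2*k)) : ℤ) : ZMod n) := by
    intro i
    rw [Df_w hk hk1 hc ((r+i) % (2*k)) (hmi i)]
    have e1 : wf n k c ((r+i) % (2*k)) = wf n k c (r+i) := wf_mod _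
    have e2 : wf n k c ((r+i) % (2*k) + 1) = wf n k c (r+i+1) := by
      unfold wf
      have h1 : ((r+i) % (2*k) + 1) % (2*k) = (r+i+1) % (2*k) := by
        conv_rhs => rw [Nat.add_mod (r+i) 1]
        rw [Nat.mod_eq_of_lt (a := 1) (by omega)]
      rw [h1]
    rw [e1, e2]
  have hsum : ∀ j : ℕ, ∑ i ∈ Finset.range j, a i = wf n k c (r+j) - wf n k c r := by
    intro j
    induction j with
    | zero => simp
    | succ j ih =>
      rw [Finset.sum_range_succ, ih]
      have harj : r + (j+1) = (r+j)+1 := by omega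
      rw [harj, ha]
      ring
  -- index injectivity from sums
  have hwidx : ∀ p q : ℕ, wf n k c p = wf n k c q → p % (2*k) = q % (2*k) :=
    fun p q h => wf_inj hk hk1 hc p q h
  refine ⟨a, ?_, ?_, ?_⟩
  · -- image condition
    have hiinj : Set.InjOn a (Finset.range (n-2)) := by
      intro i hi i' hi' h
      rw [haDf, haDf] at h
      have hmm := Df_modinj hk hk1 hc _ _ (hmi i) (hmi i') h
      have hi1 : i < n - 2 := Finset.mem_range.mp hi
      have hi2 : i' < n - 2 := Finset.mem_range.mp hi'
      have m1 := modsmall (r+i) (2*k) h2k (by omega)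
      have m2 := modsmall (r+i') (2*k) h2k (by omega)
      rw [m1, m2] at hmm
      split_ifs at hmm <;> omega
    have hsub : (Finset.range (n-2)).image a ⊆ (Finset.univ.erase (0 : ZMod n)).erase x := by
      intro y hy
      obtain ⟨i, hi, rfl⟩ := Finset.mem_image.mp hy
      have hi1 : i < n - 2 := Finset.mem_range.mp hi
      refine Finset.mem_erase.mpr ⟨?_, Finset.mem_erase.mpr ⟨?_, Finset.mem_univ _⟩⟩
      · -- a i ≠ x
        intro hax
        rw [haDf] at hax
        rw [← hj0] at hax
        have := Df_modinj hk hk1 hc _ _ (hmi i) hj0lt hax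
        have m1 := modsmall (r+i) (2*k) h2k (by omega)
        rw [m1] at this
        split_ifs at this <;> omega
      · rw [haDf]
        exact Df_nonzero_mod hk hk1 hc _ (hmi i)
    refine Finset.eq_of_subset_of_card_le hsub ?_
    have hc1 : ((Finset.univ.erase (0 : ZMod n)).erase x).card = n - 2 := by
      rw [Finset.card_erase_of_mem (Finset.mem_erase.mpr ⟨hx, Finset.mem_univ _⟩), hucard]
      omega
    have hc2 : ((Finset.range (n-2)).image a).card = n - 2 := by
      rw [Finset.card_image_of_injOn hiinj, Finset.card_range]
    rw [hc1, hc2]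
  · -- partial sums nonzero
    intro j h1 h2
    rw [hsum]
    intro heq
    have heq2 : wf n k c (r+j) = wf n k c r := by
      have := sub_eq_zero.mp heq
      exact this
    have hmm := hwidx _ _ heq2
    have m1 := modsmall (r+j) (2*k) h2k (by omega)
    have m2 := modsmall r (2*k) h2k (by omega)
    rw [m1, m2] at hmm
    split_ifs at hmm <;> omega
  · -- partial sums distinct
    intro j j' h1 h2 h3 h4 heq
    rw [hsum, hsum] at heq
    have heq2 : wf n k c (r+j) = wf n k c (r+j') := by
      have := sub_left_inj.mp heq
      exact this
    have hmm := hwidx _ _ heq2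
    have m1 := modsmall (r+j) (2*k) h2k (by omega)
    have m2 := modsmall (r+j') (2*k) h2k (by omega)
    rw [m1, m2] at hmm
    split_ifs at hmm <;> omega
end

section
/- Let n be odd and let x, y be distinct nonzero elements of Z_n. If Z_n has a rotational sequencing (b_1, ..., b_{n-1}) in which x and y occupy adjacent positions (cyclically), then the elements of Z_n \ {0, x, y} can be ordered so that all the partial sums s_1, ..., s_{n-3} are pairwise distinct and nonzero. -/
/-- If `Z_n` (`n` odd) has a rotational sequencing in which distinct nonzero `x` and `y`
occupy cyclically adjacent positions, then `Z_n \ {0, x, y}` can be ordered so that the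
partial sums `s_1, …, s_{n-3}` are pairwise distinct and nonzero. -/
theorem order_remove_two_of_adjacent (n : ℕ) [NeZero n] (hn : 3 ≤ n) (hodd : Odd n)
    (x y : ZMod n) (hx : x ≠ 0) (hy : y ≠ 0) (hxy : x ≠ y)
    (hseq : ∃ a : ℕ → ZMod n,
      (Finset.range (n - 1)).image a = Finset.univ.erase (0 : ZMod n) ∧
      (∀ i < n - 1, ∀ j < n - 1,
        a ((i + 1) % (n - 1)) - a i = a ((j + 1) % (n - 1)) - a j → i = j) ∧
      (∃ i < n - 1,
        (a ((i + 1) % (n - 1)) - a i = x ∧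
          a ((i + 2) % (n - 1)) - a ((i + 1) % (n - 1)) = y) ∨
        (a ((i + 1) % (n - 1)) - a i = y ∧
          a ((i + 2) % (n - 1)) - a ((i + 1) % (n - 1)) = x))) :
    ∃ c : ℕ → ZMod n,
      (Finset.range (n - 3)).image c = ((Finset.univ.erase (0 : ZMod n)).erase x).erase y ∧
      (∀ j, 1 ≤ j → j ≤ n - 3 → ∑ i ∈ Finset.range j, c i ≠ 0) ∧
      (∀ j k, 1 ≤ j → j ≤ n - 3 → 1 ≤ k → k ≤ n - 3 →
        ∑ i ∈ Finset.range j, c i = ∑ i ∈ Finset.range k, c i → j = k) := by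
  classical
  obtain ⟨a, h1, h2, i, hi, hcase⟩ := hseq
  set m := n - 1 with hm_def
  have hm2 : 2 ≤ m := by omega
  have hm0 : 0 < m := by omega
  -- cardinality facts
  have hcard_univ : (Finset.univ : Finset (ZMod n)).card = n := by
    simp [ZMod.card]
  have hcard_e0 : ((Finset.univ : Finset (ZMod n)).erase 0).card = m := by
    rw [Finset.card_erase_of_mem (Finset.mem_univ _), hcard_univ]
  -- a is injective on range m
  have hcard_img : ((Finset.range m).image a).card = (Finset.range m).card := by
    rw [h1, hcard_e0, Finset.card_range]
  have ha_injOn : Set.InjOn a (Finset.range m) := Finset.card_image_iff.mp hcard_img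
  have ha_inj : ∀ j < m, ∀ k < m, a j = a k → j = k := by
    intro j hj k hk h
    exact ha_injOn (by simpa using hj) (by simpa using hk) h
  -- modular index lemmas
  have hmod_inj : ∀ s j k : ℕ, j < m → k < m → (s + j) % m = (s + k) % m → j = k := by
    intro s j k hj hk h
    have h' : j ≡ k [MOD m] := Nat.ModEq.add_left_cancel' s h
    have := h'.eq_of_lt_of_lt hj hk
    exact this
  -- differences are nonzero
  have hbne : ∀ j < m, a ((j + 1) % m) - a j ≠ 0 := by
    intro j hj h
    have hjj : (j + 1) % m ≠ j := by
      rcases Nat.lt_or_ge (j + 1) m with h' | h'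
      · rw [Nat.mod_eq_of_lt h']; omega
      · have : j + 1 = m := by omega
        rw [this, Nat.mod_self]; omega
    exact hjj (ha_inj _ (Nat.mod_lt _ hm0) _ hj (by rwa [sub_eq_zero] at h))
  -- second adjacent difference rewrite
  have hq1 : ((i + 1) % m + 1) % m = (i + 2) % m := by
    rw [Nat.mod_add_mod]
  set q := (i + 1) % m with hq_def
  have hq_lt : q < m := Nat.mod_lt _ hm0
  have hiq : i ≠ q := by
    intro h
    rcases Nat.lt_or_ge (i + 1) m with h' | h'
    · rw [hq_def, Nat.mod_eq_of_lt h'] at h; omega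
    · have : i + 1 = m := by omega
      rw [hq_def, this, Nat.mod_self] at h; omega
  -- the two removed differences are x and y (in some order)
  have hkey : (a ((i + 1) % m) - a i = x ∧ a ((q + 1) % m) - a q = y) ∨
      (a ((i + 1) % m) - a i = y ∧ a ((q + 1) % m) - a q = x) := by
    rw [hq_def, hq1]
    exact hcase
  -- the ordering
  set c : ℕ → ZMod n := fun j => a ((i + 2 + j + 1) % m) - a ((i + 2 + j) % m) with hc_def
  have hc_eq : ∀ j : ℕ, c j = a (((i + 2 + j) % m + 1) % m) - a ((i + 2 + j) % m) := by
    intro j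
    rw [hc_def]
    simp only [Nat.mod_add_mod]
  -- index avoidance
  have hne_i : ∀ j < m - 2, (i + 2 + j) % m ≠ i := by
    intro j hj h
    have h' : (i + (2 + j)) % m = (i + 0) % m := by
      rw [Nat.add_zero, ← Nat.add_assoc]
      rw [h, Nat.mod_eq_of_lt (by omega)]
    have := hmod_inj i (2 + j) 0 (by omega) (by omega) h'
    omega
  have hne_q : ∀ j < m - 2, (i + 2 + j) % m ≠ q := by
    intro j hj h
    have h' : (i + 1 + (1 + j)) % m = (i + 1 + 0) % m := by
      have e1 : i + 1 + (1 + j) = i + 2 + j := by omega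
      rw [e1, h, hq_def, Nat.add_zero]
    have := hmod_inj (i + 1) (1 + j) 0 (by omega) (by omega) h'
    omega
  -- c is injective on range (m - 2)
  have hc_inj : ∀ j < m - 2, ∀ k < m - 2, c j = c k → j = k := by
    intro j hj k hk h
    rw [hc_eq j, hc_eq k] at h
    have := h2 _ (Nat.mod_lt _ hm0) _ (Nat.mod_lt _ hm0) h
    exact hmod_inj (i + 2) j k (by omega) (by omega) this
  -- c values avoid 0, x, y
  have hc_mem : ∀ j < m - 2, c j ∈ ((Finset.univ.erase (0 : ZMod n)).erase x).erase y := by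
    intro j hj
    have hlt : (i + 2 + j) % m < m := Nat.mod_lt _ hm0
    have hne0 : c j ≠ 0 := by rw [hc_eq j]; exact hbne _ hlt
    have hnebi : c j ≠ a ((i + 1) % m) - a i := by
      intro h
      rw [hc_eq j] at h
      exact hne_i j hj (h2 _ hlt _ hi h)
    have hnebq : c j ≠ a ((q + 1) % m) - a q := by
      intro h
      rw [hc_eq j] at h
      exact hne_q j hj (h2 _ hlt _ hq_lt h)
    have hnx : c j ≠ x := by
      rcases hkey with ⟨h1', h2'⟩ | ⟨h1', h2'⟩
      · rw [← h1']; exact hnebi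
      · rw [← h2']; exact hnebq
    have hny : c j ≠ y := by
      rcases hkey with ⟨h1', h2'⟩ | ⟨h1', h2'⟩
      · rw [← h2']; exact hnebq
      · rw [← h1']; exact hnebi
    simp [Finset.mem_erase, hnx, hny, hne0]
  have hn3 : n - 3 = m - 2 := by omega
  -- target card
  have hcard_t : (((Finset.univ.erase (0 : ZMod n)).erase x).erase y).card = m - 2 := by
    have hyx : y ∈ (Finset.univ.erase (0 : ZMod n)).erase x :=
      Finset.mem_erase.mpr ⟨Ne.symm hxy, Finset.mem_erase.mpr ⟨hy, Finset.mem_univ _⟩⟩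
    have hxx : x ∈ Finset.univ.erase (0 : ZMod n) :=
      Finset.mem_erase.mpr ⟨hx, Finset.mem_univ _⟩
    rw [Finset.card_erase_of_mem hyx, Finset.card_erase_of_mem hxx, hcard_e0]
    omega
  -- image equality
  have himg : (Finset.range (n - 3)).image c = ((Finset.univ.erase (0 : ZMod n)).erase x).erase y := by
    rw [hn3]
    apply Finset.eq_of_subset_of_card_le
    · intro z hz
      obtain ⟨j, hj, rfl⟩ := Finset.mem_image.mp hz
      exact hc_mem j (Finset.mem_range.mp hj)
    · rw [hcard_t]
      have : ((Finset.range (m - 2)).image c).card = (Finset.range (m - 2)).card := by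
        apply Finset.card_image_iff.mpr
        intro u hu v hv h
        simp only [Finset.coe_range, Set.mem_Iio] at hu hv
        exact hc_inj u hu v hv h
      rw [this, Finset.card_range]
  -- telescoping sums
  have hsum : ∀ k : ℕ, ∑ t ∈ Finset.range k, c t = a ((i + 2 + k) % m) - a ((i + 2) % m) := by
    intro k
    induction k with
    | zero => simp
    | succ k ih =>
      rw [Finset.sum_range_succ, ih, hc_def]
      have e1 : i + 2 + (k + 1) = i + 2 + k + 1 := by omega
      rw [e1]
      ring
  refine ⟨c, himg, ?_, ?_⟩
  · intro j hj1 hj2 h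
    rw [hsum j, sub_eq_zero] at h
    have := ha_inj _ (Nat.mod_lt _ hm0) _ (Nat.mod_lt _ hm0) h
    have : j = 0 := hmod_inj (i + 2) j 0 (by omega) (by omega) (by simpa using this)
    omega
  · intro j k hj1 hj2 hk1 hk2 h
    rw [hsum j, hsum k, sub_left_injective.eq_iff] at h
    have := ha_inj _ (Nat.mod_lt _ hm0) _ (Nat.mod_lt _ hm0) h
    exact hmod_inj (i + 2) j k (by omega) (by omega) this
end

section
/- For every k ≥ 2, the coefficient of the monomial x_1^0 x_2^2 x_3^4 ⋯ x_k^{2k-2} (i.e., x_i has exponent 2(i-1)) in the polynomial g_k(x_1, ..., x_k) = ∏_{1 ≤ i < j ≤ k} (x_j - x_i)(x_i + ... + x_j) over the integers equals 1. -/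
open MvPolynomial

section Aux

variable {k : ℕ}

/-- Weight of a variable: its index. -/
private def wt (k : ℕ) : Fin k → ℕ := fun i => (i : ℕ)

/-- All monomials of `p` have weight at most `n`. -/
private def SuppLe (n : ℕ) (p : MvPolynomial (Fin k) ℤ) : Prop :=
  ∀ d ∈ p.support, Finsupp.weight (wt k) d ≤ n

private lemma SuppLe.mono {m n : ℕ} {p : MvPolynomial (Fin k) ℤ} (h : SuppLe m p)
    (hmn : m ≤ n) : SuppLe n p := fun d hd => (h d hd).trans hmn

private lemma suppLe_X (i : Fin k) : SuppLe (i : ℕ) (X i : MvPolynomial (Fin k) ℤ) := by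
  intro d hd
  rw [MvPolynomial.support_X] at hd
  simp only [Finset.mem_singleton] at hd
  subst hd
  simp [Finsupp.weight_apply, Finsupp.sum_single_index, wt]

private lemma suppLe_one : SuppLe 0 (1 : MvPolynomial (Fin k) ℤ) := by
  intro d hd
  rw [MvPolynomial.mem_support_iff, MvPolynomial.coeff_one] at hd
  split_ifs at hd with h
  · subst h; simp
  · simp at hd

private lemma SuppLe.mul {m n : ℕ} {p q : MvPolynomial (Fin k) ℤ} (hp : SuppLe m p)
    (hq : SuppLe n q) : SuppLe (m + n) (p * q) := by
  intro d hd
  have hd' := MvPolynomial.support_mul p q hd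
  rw [Finset.mem_add] at hd'
  obtain ⟨a, ha, b, hb, rfl⟩ := hd'
  rw [map_add]
  exact add_le_add (hp a ha) (hq b hb)

private lemma SuppLe.add {n : ℕ} {p q : MvPolynomial (Fin k) ℤ} (hp : SuppLe n p)
    (hq : SuppLe n q) : SuppLe n (p + q) := by
  intro d hd
  have hd' := MvPolynomial.support_add hd
  rcases Finset.mem_union.1 hd' with h | h
  · exact hp d h
  · exact hq d h

private lemma SuppLe.neg {n : ℕ} {p : MvPolynomial (Fin k) ℤ} (hp : SuppLe n p) :
    SuppLe n (-p) := by
  intro d hd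
  rw [MvPolynomial.support_neg] at hd
  exact hp d hd

private lemma SuppLe.sub {n : ℕ} {p q : MvPolynomial (Fin k) ℤ} (hp : SuppLe n p)
    (hq : SuppLe n q) : SuppLe n (p - q) := by
  rw [sub_eq_add_neg]; exact hp.add hq.neg

private lemma suppLe_sum {α : Type*} {s : Finset α} {f : α → MvPolynomial (Fin k) ℤ} {n : ℕ}
    (h : ∀ a ∈ s, SuppLe n (f a)) : SuppLe n (∑ a ∈ s, f a) := by
  classical
  induction s using Finset.induction_on with
  | empty => intro d hd; simp at hd
  | insert _ _ hx ih =>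
    rw [Finset.sum_insert hx]
    exact (h _ (Finset.mem_insert_self _ _)).add
      (ih fun a ha => h a (Finset.mem_insert_of_mem ha))

private lemma suppLe_prod {α : Type*} {s : Finset α} {f : α → MvPolynomial (Fin k) ℤ}
    {n : α → ℕ} (h : ∀ a ∈ s, SuppLe (n a) (f a)) :
    SuppLe (∑ a ∈ s, n a) (∏ a ∈ s, f a) := by
  classical
  induction s using Finset.induction_on with
  | empty => simpa using suppLe_one
  | insert _ _ hx ih =>
    rw [Finset.sum_insert hx, Finset.prod_insert hx]
    exact (h _ (Finset.mem_insert_self _ _)).mul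
      (ih fun a ha => h a (Finset.mem_insert_of_mem ha))

private lemma SuppLe.coeff_eq_zero {n : ℕ} {p : MvPolynomial (Fin k) ℤ} (hp : SuppLe n p)
    {d : Fin k →₀ ℕ} (hd : n < Finsupp.weight (wt k) d) : MvPolynomial.coeff d p = 0 := by
  by_contra h
  exact absurd (hp d (MvPolynomial.mem_support_iff.2 h)) (not_le.2 hd)

/-- The pair set. -/
private def PP (k : ℕ) : Finset (Fin k × Fin k) :=
  Finset.univ.filter (fun q : Fin k × Fin k => q.1 < q.2)

/-- The "rest" of a factor after removing the top term `X q.2 ^ 2`. -/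
private noncomputable def rr (q : Fin k × Fin k) : MvPolynomial (Fin k) ℤ :=
  (X q.2 - X q.1) * (∑ l ∈ Finset.Icc q.1 q.2, X l) - X q.2 ^ 2

private lemma factor_eq (q : Fin k × Fin k) :
    (X q.2 - X q.1) * (∑ l ∈ Finset.Icc q.1 q.2, X l)
      = X q.2 ^ 2 + rr q := by
  rw [rr]; ring

private lemma suppLe_Ico_sum (q : Fin k × Fin k) (hq : q.1 < q.2) :
    SuppLe ((q.2 : ℕ) - 1) (∑ l ∈ Finset.Ico q.1 q.2, (X l : MvPolynomial (Fin k) ℤ)) := by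
  apply suppLe_sum
  intro l hl
  rw [Finset.mem_Ico] at hl
  exact (suppLe_X l).mono (by
    have : (l : ℕ) < (q.2 : ℕ) := hl.2
    omega)

private lemma suppLe_Icc_sum (q : Fin k × Fin k) :
    SuppLe (q.2 : ℕ) (∑ l ∈ Finset.Icc q.1 q.2, (X l : MvPolynomial (Fin k) ℤ)) := by
  apply suppLe_sum
  intro l hl
  rw [Finset.mem_Icc] at hl
  exact (suppLe_X l).mono hl.2

private lemma suppLe_rr (q : Fin k × Fin k) (hq : q.1 < q.2) :
    SuppLe (2 * (q.2 : ℕ) - 1) (rr q) := by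
  have h2 : (1 : ℕ) ≤ (q.2 : ℕ) := by
    have : (q.1 : ℕ) < (q.2 : ℕ) := hq
    omega
  have hsplit : (∑ l ∈ Finset.Icc q.1 q.2, (X l : MvPolynomial (Fin k) ℤ))
      = (∑ l ∈ Finset.Ico q.1 q.2, X l) + X q.2 := by
    have hm : q.2 ∈ Finset.Icc q.1 q.2 := Finset.mem_Icc.2 ⟨le_of_lt hq, le_refl _⟩
    rw [← Finset.Icc_erase_right q.1 q.2]
    exact (Finset.sum_erase_add _ _ hm).symm
  have hrr : rr q = X q.2 * (∑ l ∈ Finset.Ico q.1 q.2, X l)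
      - X q.1 * (∑ l ∈ Finset.Icc q.1 q.2, X l) := by
    rw [rr, hsplit]; ring
  rw [hrr]
  apply SuppLe.sub
  · exact ((suppLe_X q.2).mul (suppLe_Ico_sum q hq)).mono (by omega)
  · apply ((suppLe_X q.1).mul (suppLe_Icc_sum q)).mono
    have : (q.1 : ℕ) < (q.2 : ℕ) := hq
    omega

/-- The target exponent vector equals the sum of `single q.2 2` over pairs. -/
private lemma target_eq :
    (Finsupp.equivFunOnFinite.symm fun i : Fin k => 2 * (i : ℕ))
      = ∑ q ∈ PP k, Finsupp.single q.2 2 := by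
  classical
  ext m
  rw [Finset.sum_apply']
  simp only [Finsupp.single_apply]
  rw [Finset.sum_ite, Finset.sum_const, Finset.sum_const, smul_eq_mul, smul_eq_mul,
    mul_zero, add_zero]
  have himg : (PP k).filter (fun q => q.2 = m) = (Finset.Iio m).image (fun i => (i, m)) := by
    ext q
    simp only [PP, Finset.mem_filter, Finset.mem_univ, true_and, Finset.mem_image,
      Finset.mem_Iio, Prod.ext_iff]
    constructor
    · rintro ⟨h1, h2⟩
      exact ⟨q.1, h2 ▸ h1, rfl, h2.symm⟩
    · rintro ⟨i, hi, rfl, rfl⟩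
      exact ⟨hi, rfl⟩
  have hcard : ((PP k).filter (fun q => q.2 = m)).card = (m : ℕ) := by
    rw [himg, Finset.card_image_of_injective _ (fun a b h => (Prod.mk.injEq _ _ _ _ ▸ h).1)]
    simp
  rw [hcard]
  simp [mul_comm]

private lemma prod_monomial {α : Type*} (s : Finset α) (d : α → (Fin k →₀ ℕ)) :
    (∏ a ∈ s, (monomial (d a) (1 : ℤ) : MvPolynomial (Fin k) ℤ))
      = monomial (∑ a ∈ s, d a) 1 := by
  classical
  induction s using Finset.induction_on with
  | empty => simp
  | insert _ _ hx ih =>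
    rw [Finset.prod_insert hx, Finset.sum_insert hx, ih, monomial_mul, one_mul]

end Aux

/-- `g_k = ∏_{1 ≤ i < j ≤ k} (x_j - x_i)(x_i + ⋯ + x_j)` (0-indexed variables). -/
noncomputable def gPoly (k : ℕ) : MvPolynomial (Fin k) ℤ :=
  ∏ q ∈ Finset.univ.filter (fun q : Fin k × Fin k => q.1 < q.2),
    ((X q.2 - X q.1) * ∑ l ∈ Finset.Icc q.1 q.2, X l)

/-- The coefficient of `x_1^0 x_2^2 ⋯ x_k^{2k-2}` (exponent `2(i-1)` on the `i`-th variable,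
so `2i` on the 0-indexed variable `i`) in `g_k` equals `1`. -/
theorem gPoly_coeff (k : ℕ) (hk : 2 ≤ k) :
    MvPolynomial.coeff (Finsupp.equivFunOnFinite.symm fun i : Fin k => 2 * (i : ℕ))
      (gPoly k) = 1 := by
  classical
  set t : Fin k →₀ ℕ := Finsupp.equivFunOnFinite.symm fun i : Fin k => 2 * (i : ℕ) with ht
  have htsum : t = ∑ q ∈ PP k, Finsupp.single q.2 2 := target_eq
  have hwt : Finsupp.weight (wt k) t = ∑ q ∈ PP k, 2 * (q.2 : ℕ) := by
    rw [htsum, map_sum]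
    refine Finset.sum_congr rfl fun q _ => ?_
    simp [Finsupp.weight_apply, Finsupp.sum_single_index, wt]
  have hP : Finset.univ.filter (fun q : Fin k × Fin k => q.1 < q.2) = PP k := rfl
  have hg : gPoly k
      = ∑ S ∈ (PP k).powerset, (∏ q ∈ S, X q.2 ^ 2) * ∏ q ∈ PP k \ S, rr q := by
    rw [gPoly, hP, Finset.prod_congr rfl (fun q _ => factor_eq q)]
    exact Finset.prod_add _ _ _
  rw [hg, MvPolynomial.coeff_sum]
  rw [Finset.sum_eq_single (PP k)]
  · rw [Finset.sdiff_self, Finset.prod_empty, mul_one]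
    have hmon : (∏ q ∈ PP k, (X q.2 : MvPolynomial (Fin k) ℤ) ^ 2) = monomial t 1 := by
      have h2 : ∀ q ∈ PP k, (X q.2 : MvPolynomial (Fin k) ℤ) ^ 2
          = monomial (Finsupp.single q.2 2) 1 := fun q _ => by rw [X_pow_eq_monomial]
      rw [Finset.prod_congr rfl h2, prod_monomial, ← htsum]
    rw [hmon, coeff_monomial, if_pos rfl]
  · intro S hSp hne
    have hS : S ⊆ PP k := Finset.mem_powerset.1 hSp
    have hb1 : SuppLe (∑ q ∈ S, 2 * (q.2 : ℕ)) (∏ q ∈ S, (X q.2 : MvPolynomial (Fin k) ℤ) ^ 2) := by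
      apply suppLe_prod
      intro q _
      rw [sq, two_mul]
      exact (suppLe_X q.2).mul (suppLe_X q.2)
    have hb2 : SuppLe (∑ q ∈ PP k \ S, (2 * (q.2 : ℕ) - 1)) (∏ q ∈ PP k \ S, rr q) := by
      apply suppLe_prod
      intro q hq
      have hq' : q ∈ PP k := (Finset.mem_sdiff.1 hq).1
      exact suppLe_rr q ((Finset.mem_filter.1 hq').2)
    apply (hb1.mul hb2).coeff_eq_zero
    rw [hwt, ← Finset.sum_sdiff hS]
    have hne' : (PP k \ S).Nonempty := by
      rw [Finset.sdiff_nonempty]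
      intro hsub
      exact hne (Finset.Subset.antisymm hS hsub)
    have hlt : ∑ q ∈ PP k \ S, (2 * (q.2 : ℕ) - 1) < ∑ q ∈ PP k \ S, 2 * (q.2 : ℕ) := by
      apply Finset.sum_lt_sum_of_nonempty hne'
      intro q hq
      have hq' : q ∈ PP k := (Finset.mem_sdiff.1 hq).1
      have h12 : (q.1 : ℕ) < (q.2 : ℕ) := (Finset.mem_filter.1 hq').2
      omega
    omega
  · intro h
    exact absurd (Finset.mem_powerset.2 (le_refl _)) h
end

section
/- For every k ≥ 2, the coefficient of the monomial x_1^{k-1} x_2^0 x_3^2 x_4^4 ⋯ x_k^{2k-4} in f_k(x_1, ..., x_k) = ∏_{1 ≤ i < j ≤ k} (x_j - x_i) · ∏_{2 ≤ i < j ≤ k} (x_i + ... + x_j) over the integers equals (-1)^{k-1}. -/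
open MvPolynomial

/-- `f_k = ∏_{i<j} (x_j - x_i) · ∏_{2 ≤ i < j} (x_i + ⋯ + x_j)` (0-indexed variables). -/
noncomputable def fPoly (k : ℕ) : MvPolynomial (Fin k) ℤ :=
  (∏ q ∈ Finset.univ.filter (fun q : Fin k × Fin k => q.1 < q.2), (X q.2 - X q.1)) *
  ∏ q ∈ Finset.univ.filter (fun q : Fin k × Fin k => 0 < (q.1 : ℕ) ∧ q.1 < q.2),
    (∑ l ∈ Finset.Icc q.1 q.2, X l)

/- ### Auxiliary material -/

section Aux

lemma degree_single' (n c : ℕ) : (Finsupp.single n c).degree = c := by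
  simp [Finsupp.degree_eq_weight_one, Finsupp.weight_apply, Finsupp.sum_single_index]

lemma eq_single_of_degree (n c : ℕ) (b : ℕ →₀ ℕ) (h1 : b.degree = c) (h2 : b n = c) :
    b = Finsupp.single n c := by
  have h3 := Finsupp.single_add_erase n b
  have hdeg : (Finsupp.single n (b n)).degree + (b.erase n).degree = b.degree := by
    rw [← h3]; simp [Finsupp.degree_eq_weight_one, map_add]
  rw [h1, h2, degree_single'] at hdeg
  have : (b.erase n).degree = 0 := by omega
  rw [Finsupp.degree_eq_zero_iff] at this
  rw [← h3, h2, this, add_zero]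

lemma deg_of_coeff {q : MvPolynomial ℕ ℤ} {c : ℕ} (hq : q.IsHomogeneous c) {b : ℕ →₀ ℕ}
    (h : coeff b q ≠ 0) : b.degree = c := by
  by_contra hne
  exact h (hq.coeff_eq_zero hne)

/-- Key splitting lemma. -/
lemma coeffA {n c : ℕ} {d : ℕ →₀ ℕ} (hd : d n = 0) {p q : MvPolynomial ℕ ℤ}
    (hp : ∀ a ∈ p.support, a n = 0) (hq : q.IsHomogeneous c) :
    coeff (Finsupp.single n c + d) (p * q) = coeff d p * coeff (Finsupp.single n c) q := by
  rw [coeff_mul]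
  rw [Finset.sum_eq_single (d, Finsupp.single n c)]
  · intro ab hab hne
    rcases ab with ⟨a, b⟩
    by_contra h0
    have ha : coeff a p ≠ 0 := fun h => h0 (by simp [h])
    have hb : coeff b q ≠ 0 := fun h => h0 (by simp [h])
    have hab' : a + b = Finsupp.single n c + d := (Finset.HasAntidiagonal.mem_antidiagonal.mp hab)
    have han : a n = 0 := hp a (MvPolynomial.mem_support_iff.mpr ha)
    have hbn : b n = c := by
      have := DFunLike.congr_fun hab' n
      simp [han, hd, Finsupp.single_eq_same] at this
      omega
    have hbs : b = Finsupp.single n c := eq_single_of_degree n c b (deg_of_coeff hq hb) hbn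
    have has : a = d := by
      have : a + b = Finsupp.single n c + d := hab'
      rw [hbs, add_comm] at this
      exact add_left_cancel this
    exact hne (by rw [has, hbs])
  · intro h
    exfalso; exact h (Finset.HasAntidiagonal.mem_antidiagonal.mpr (add_comm _ _))

lemma coeffC {n c₁ c₂ : ℕ} {p q : MvPolynomial ℕ ℤ}
    (hp : p.IsHomogeneous c₁) (hq : q.IsHomogeneous c₂) :
    coeff (Finsupp.single n (c₁ + c₂)) (p * q)
      = coeff (Finsupp.single n c₁) p * coeff (Finsupp.single n c₂) q := by
  rw [coeff_mul]
  rw [Finset.sum_eq_single (Finsupp.single n c₁, Finsupp.single n c₂)]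
  · intro ab hab hne
    rcases ab with ⟨a, b⟩
    by_contra h0
    have ha : coeff a p ≠ 0 := fun h => h0 (by simp [h])
    have hb : coeff b q ≠ 0 := fun h => h0 (by simp [h])
    have hab' : a + b = Finsupp.single n (c₁ + c₂) := Finset.HasAntidiagonal.mem_antidiagonal.mp hab
    have hbn : b n = c₂ := by
      have hbd := deg_of_coeff hq hb
      have h1 : b n ≤ b.degree := Finsupp.le_degree n b
      have hsub : b.support ⊆ {n} := by
        intro i hi
        simp only [Finsupp.mem_support_iff] at hi
        simp only [Finset.mem_singleton]
        by_contra hin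
        have h3 := DFunLike.congr_fun hab' i
        simp only [Finsupp.add_apply, Finsupp.single_apply, if_neg (Ne.symm hin)] at h3
        omega
      have h2 : b.degree ≤ b n := by
        rw [Finsupp.degree]
        calc ∑ i ∈ b.support, b i ≤ ∑ i ∈ {n}, b i :=
              Finset.sum_le_sum_of_subset hsub
          _ = b n := Finset.sum_singleton _ _
      omega
    have hbs : b = Finsupp.single n c₂ := eq_single_of_degree n c₂ b (deg_of_coeff hq hb) hbn
    have has : a = Finsupp.single n c₁ := by
      have : a + Finsupp.single n c₂ = Finsupp.single n c₁ + Finsupp.single n c₂ := by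
        rw [← hbs, hab', Finsupp.single_add, hbs]
      exact add_right_cancel this
    exact hne (by rw [has, hbs])
  · intro h
    exfalso
    exact h (Finset.HasAntidiagonal.mem_antidiagonal.mpr (by rw [← Finsupp.single_add]))

lemma coeffB {ι : Type*} {n : ℕ} {s : Finset ι} {f : ι → MvPolynomial ℕ ℤ} {c : ι → ℕ}
    (h : ∀ i ∈ s, (f i).IsHomogeneous (c i)) :
    coeff (Finsupp.single n (∑ i ∈ s, c i)) (∏ i ∈ s, f i)
      = ∏ i ∈ s, coeff (Finsupp.single n (c i)) (f i) := by
  classical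
  induction s using Finset.cons_induction with
  | empty => simp
  | cons a s ha ih =>
    rw [Finset.sum_cons, Finset.prod_cons, Finset.prod_cons,
      coeffC (h a (Finset.mem_cons_self a s))
        (IsHomogeneous.prod s f c (fun i hi => h i (Finset.mem_cons_of_mem hi))),
      ih (fun i hi => h i (Finset.mem_cons_of_mem hi))]

lemma coeff_X_sub (n i : ℕ) (h : i ≠ n) :
    coeff (Finsupp.single n 1) ((X n - X i : MvPolynomial ℕ ℤ)) = 1 := by
  rw [coeff_sub, coeff_X, coeff_X']
  simp [Finsupp.single_left_inj, (by simp : (1:ℕ) ≠ 0), h]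

lemma coeff_X_sub' (n i : ℕ) (h : i ≠ n) :
    coeff (Finsupp.single n 1) ((X i - X n : MvPolynomial ℕ ℤ)) = -1 := by
  rw [coeff_sub, coeff_X, coeff_X']
  simp [Finsupp.single_left_inj, (by simp : (1:ℕ) ≠ 0), h]

lemma coeff_sum_X {s : Finset ℕ} {n : ℕ} (hn : n ∈ s) :
    coeff (Finsupp.single n 1) (∑ l ∈ s, (X l : MvPolynomial ℕ ℤ)) = 1 := by
  rw [coeff_sum]
  rw [Finset.sum_eq_single n]
  · exact coeff_X_same n
  · intro l hl hln
    rw [coeff_X']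
    rw [if_neg]
    intro hc
    exact hln ((Finsupp.single_left_inj (by simp)).mp hc)
  · exact fun h => absurd hn h

noncomputable def hP (m : ℕ) : MvPolynomial ℕ ℤ :=
  ∏ i ∈ Finset.range m, ((X m - X i) * ∑ l ∈ Finset.Icc i m, X l)

noncomputable def gP : ℕ → MvPolynomial ℕ ℤ
  | 0 => 1
  | (m+1) => gP m * hP m

noncomputable def dd (m : ℕ) : ℕ →₀ ℕ := ∑ i ∈ Finset.range m, Finsupp.single i (2*i)

lemma sumX_hom (s : Finset ℕ) : (∑ l ∈ s, (X l : MvPolynomial ℕ ℤ)).IsHomogeneous 1 :=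
  IsHomogeneous.sum _ _ _ (fun l _ => isHomogeneous_X _ _)

lemma factor_hom (m i : ℕ) :
    ((X m - X i) * ∑ l ∈ Finset.Icc i m, (X l : MvPolynomial ℕ ℤ)).IsHomogeneous 2 :=
  ((isHomogeneous_X _ _).sub (isHomogeneous_X _ _)).mul (sumX_hom _)

lemma hP_hom (m : ℕ) : (hP m).IsHomogeneous (2 * m) := by
  rw [hP, show 2 * m = ∑ _i ∈ Finset.range m, 2 by simp [mul_comm]]
  exact IsHomogeneous.prod _ _ _ (fun i _ => factor_hom m i)

lemma gP_supported (m : ℕ) : gP m ∈ supported ℤ (↑(Finset.range m) : Set ℕ) := by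
  induction m with
  | zero => exact one_mem _
  | succ m ih =>
    rw [gP]
    apply mul_mem
    · exact supported_mono (by intro x hx; simp at hx ⊢; omega) ih
    · apply prod_mem
      intro i hi
      simp only [Finset.mem_range] at hi
      apply mul_mem
      · exact sub_mem (X_mem_supported.mpr (by simp)) (X_mem_supported.mpr (by simp; omega))
      · apply sum_mem
        intro l hl
        simp only [Finset.mem_Icc] at hl
        exact X_mem_supported.mpr (by simp; omega)

lemma gP_avoids (m : ℕ) {a : ℕ →₀ ℕ} (ha : a ∈ (gP m).support) : a m = 0 := by
  have h := mem_supported.mp (gP_supported m)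
  by_contra h0
  have hm : m ∈ (gP m).vars := (mem_vars m).mpr ⟨a, ha, Finsupp.mem_support_iff.mpr h0⟩
  have := h hm
  simp at this

lemma dd_apply_ge (m j : ℕ) (h : m ≤ j) : dd m j = 0 := by
  rw [dd, Finset.sum_apply']
  apply Finset.sum_eq_zero
  intro i hi
  simp only [Finset.mem_range] at hi
  rw [Finsupp.single_apply, if_neg (by omega)]

lemma dd_apply_lt (m j : ℕ) (h : j < m) : dd m j = 2 * j := by
  rw [dd, Finset.sum_apply']
  rw [Finset.sum_eq_single j]
  · exact Finsupp.single_eq_same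
  · intro i _ hij
    rw [Finsupp.single_apply, if_neg hij]
  · intro hj
    exact absurd (Finset.mem_range.mpr h) hj

lemma coeff_hP (m : ℕ) : coeff (Finsupp.single m (2 * m)) (hP m) = 1 := by
  have hsum : (2 * m) = ∑ _i ∈ Finset.range m, 2 := by simp [mul_comm]
  rw [hP, hsum, coeffB (fun i _ => factor_hom m i)]
  apply Finset.prod_eq_one
  intro i hi
  simp only [Finset.mem_range] at hi
  rw [show (2:ℕ) = 1 + 1 from rfl,
    coeffC ((isHomogeneous_X _ _).sub (isHomogeneous_X _ _)) (sumX_hom _),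
    coeff_X_sub m i (by omega), coeff_sum_X (Finset.mem_Icc.mpr ⟨by omega, le_refl m⟩)]
  ring

lemma coeff_gP (m : ℕ) : coeff (dd m) (gP m) = 1 := by
  induction m with
  | zero => simp [gP, dd]
  | succ m ih =>
    have hdd : dd (m+1) = Finsupp.single m (2*m) + dd m := by
      rw [dd, Finset.sum_range_succ, add_comm, dd]
    rw [hdd, gP, coeffA (dd_apply_ge m m le_rfl) (fun a ha => gP_avoids m ha) (hP_hom m),
      ih, coeff_hP, one_mul]

lemma pairSplit {M : Type*} [CommMonoid M] (m : ℕ) (f : ℕ × ℕ → M) :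
    ∏ p ∈ (Finset.range (m+1) ×ˢ Finset.range (m+1)).filter (fun p => p.1 < p.2), f p
      = (∏ p ∈ (Finset.range m ×ˢ Finset.range m).filter (fun p => p.1 < p.2), f p)
        * ∏ i ∈ Finset.range m, f (i, m) := by
  classical
  have himg : ∏ i ∈ Finset.range m, f (i, m)
      = ∏ p ∈ (Finset.range m).image (fun i => (i, m)), f p :=
    (Finset.prod_image (fun a _ b _ h => by simpa using congrArg Prod.fst h)).symm
  rw [himg, ← Finset.prod_union]
  · apply Finset.prod_congr _ (fun _ _ => rfl)
    ext ⟨a, b⟩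
    simp only [Finset.mem_filter, Finset.mem_product, Finset.mem_range, Finset.mem_union,
      Finset.mem_image, Prod.mk.injEq]
    constructor
    · rintro ⟨⟨ha, hb⟩, hab⟩
      rcases Nat.lt_or_ge b m with h | h
      · exact Or.inl ⟨⟨by omega, h⟩, hab⟩
      · exact Or.inr ⟨a, by omega, rfl, by omega⟩
    · rintro (⟨⟨ha, hb⟩, hab⟩ | ⟨i, hi, rfl, rfl⟩)
      · exact ⟨⟨by omega, by omega⟩, hab⟩
      · exact ⟨⟨by omega, by omega⟩, hi⟩
  · rw [Finset.disjoint_right]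
    rintro ⟨a, b⟩ hmem hmem2
    simp only [Finset.mem_image] at hmem
    obtain ⟨i, hi, heq⟩ := hmem
    simp only [Finset.mem_filter, Finset.mem_product, Finset.mem_range] at hmem2
    cases heq
    omega

lemma gP_eq (m : ℕ) : gP m =
    ∏ p ∈ (Finset.range m ×ˢ Finset.range m).filter (fun p => p.1 < p.2),
      ((X p.2 - X p.1) * ∑ l ∈ Finset.Icc p.1 p.2, X l) := by
  induction m with
  | zero => simp [gP]
  | succ m ih => rw [pairSplit, ← ih, gP, hP]

/-- reindexing products over Fin pairs to products over ℕ pairs -/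
lemma finPairProd {M : Type*} [CommMonoid M] (k : ℕ) (c : ℕ × ℕ → Prop) [DecidablePred c]
    (f : ℕ × ℕ → M) :
    ∏ q ∈ Finset.univ.filter (fun q : Fin k × Fin k => c (q.1.val, q.2.val)),
        f (q.1.val, q.2.val)
      = ∏ p ∈ (Finset.range k ×ˢ Finset.range k).filter c, f p := by
  apply Finset.prod_bij (fun q _ => (q.1.val, q.2.val))
  · rintro ⟨a, b⟩ hq
    simp only [Finset.mem_filter, Finset.mem_univ, true_and] at hq
    simp only [Finset.mem_filter, Finset.mem_product, Finset.mem_range]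
    exact ⟨⟨a.isLt, b.isLt⟩, hq⟩
  · rintro ⟨a, b⟩ _ ⟨a', b'⟩ _ h
    simp only [Prod.mk.injEq] at h
    ext
    · exact h.1
    · exact h.2
  · rintro ⟨a, b⟩ hp
    simp only [Finset.mem_filter, Finset.mem_product, Finset.mem_range] at hp
    exact ⟨(⟨a, hp.1.1⟩, ⟨b, hp.1.2⟩), by simpa using hp.2, rfl⟩
  · intros; rfl

lemma rename_sum_Icc (k : ℕ) (a b : Fin k) :
    rename Fin.val (∑ l ∈ Finset.Icc a b, (X l : MvPolynomial (Fin k) ℤ))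
      = ∑ l ∈ Finset.Icc a.val b.val, X l := by
  rw [map_sum, ← Fin.map_valEmbedding_Icc, Finset.sum_map]
  simp [rename_X]

/-- decomposing the renamed fPoly -/
lemma F_eq (k : ℕ) (hk : 2 ≤ k) :
    rename Fin.val (fPoly k)
      = (∏ j ∈ Finset.Ico 1 k, ((X j : MvPolynomial ℕ ℤ) - X 0))
        * rename (· + 1) (gP (k - 1)) := by
  classical
  rw [fPoly, map_mul, map_prod, map_prod]
  have h1 : ∀ q : Fin k × Fin k,
      rename Fin.val ((X q.2 - X q.1 : MvPolynomial (Fin k) ℤ))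
        = (X q.2.val - X q.1.val : MvPolynomial ℕ ℤ) := by
    intro q; rw [map_sub, rename_X, rename_X]
  rw [Finset.prod_congr rfl (fun q _ => h1 q),
      Finset.prod_congr rfl (fun (q : Fin k × Fin k) _ => rename_sum_Icc k q.1 q.2)]
  have hfil1 : (Finset.univ.filter (fun q : Fin k × Fin k => q.1 < q.2))
      = Finset.univ.filter (fun q : Fin k × Fin k =>
          (fun p : ℕ × ℕ => p.1 < p.2) (q.1.val, q.2.val)) := by
    apply Finset.filter_congr; intro q _; exact Iff.rfl
  have hfil2 : (Finset.univ.filter (fun q : Fin k × Fin k => 0 < (q.1 : ℕ) ∧ q.1 < q.2))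
      = Finset.univ.filter (fun q : Fin k × Fin k =>
          (fun p : ℕ × ℕ => 0 < p.1 ∧ p.1 < p.2) (q.1.val, q.2.val)) := by
    apply Finset.filter_congr; intro q _; exact Iff.rfl
  rw [hfil1, hfil2,
    finPairProd k (fun p => p.1 < p.2) (fun p => (X p.2 - X p.1 : MvPolynomial ℕ ℤ)),
    finPairProd k (fun p => 0 < p.1 ∧ p.1 < p.2)
      (fun p => ∑ l ∈ Finset.Icc p.1 p.2, (X l : MvPolynomial ℕ ℤ))]
  set S := (Finset.range k ×ˢ Finset.range k).filter (fun p : ℕ × ℕ => p.1 < p.2) with hS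
  set T := (Finset.range k ×ˢ Finset.range k).filter
      (fun p : ℕ × ℕ => 0 < p.1 ∧ p.1 < p.2) with hT
  have h2 : ∏ p ∈ S, (X p.2 - X p.1 : MvPolynomial ℕ ℤ)
      = (∏ p ∈ S.filter (fun p => p.1 = 0), (X p.2 - X p.1))
        * ∏ p ∈ S.filter (fun p => ¬ p.1 = 0), (X p.2 - X p.1) :=
    (Finset.prod_filter_mul_prod_filter_not S _ _).symm
  have h3 : S.filter (fun p => p.1 = 0) = (Finset.Ico 1 k).image (fun j => ((0, j) : ℕ × ℕ)) := by
    ext ⟨a, b⟩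
    simp only [hS, Finset.mem_filter, Finset.mem_product, Finset.mem_range, Finset.mem_image,
      Finset.mem_Ico, Prod.mk.injEq]
    constructor
    · rintro ⟨⟨⟨ha, hb⟩, hab⟩, rfl⟩
      exact ⟨b, ⟨by omega, hb⟩, rfl, rfl⟩
    · rintro ⟨j, ⟨hj1, hj2⟩, rfl, rfl⟩
      exact ⟨⟨⟨by omega, hj2⟩, by omega⟩, rfl⟩
  have h4 : S.filter (fun p => ¬ p.1 = 0) = T := by
    ext ⟨a, b⟩
    simp only [hS, hT, Finset.mem_filter, Finset.mem_product, Finset.mem_range]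
    omega
  have h5 : ∏ p ∈ (Finset.Ico 1 k).image (fun j => ((0, j) : ℕ × ℕ)),
        (X p.2 - X p.1 : MvPolynomial ℕ ℤ)
      = ∏ j ∈ Finset.Ico 1 k, (X j - X 0) :=
    Finset.prod_image (fun a _ b _ h => by simpa using congrArg Prod.snd h)
  have hTimg : T = ((Finset.range (k-1) ×ˢ Finset.range (k-1)).filter
      (fun p : ℕ × ℕ => p.1 < p.2)).image (fun p => (p.1 + 1, p.2 + 1)) := by
    ext ⟨a, b⟩
    simp only [hT, Finset.mem_filter, Finset.mem_product, Finset.mem_range, Finset.mem_image,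
      Prod.mk.injEq]
    constructor
    · rintro ⟨⟨ha, hb⟩, h0, hab⟩
      exact ⟨(a - 1, b - 1), ⟨⟨by omega, by omega⟩, by omega⟩, by omega, by omega⟩
    · rintro ⟨⟨i, j⟩, ⟨⟨hi, hj⟩, hij⟩, rfl, rfl⟩
      exact ⟨⟨by omega, by omega⟩, by omega, by omega⟩
  have h6 : rename (· + 1) (gP (k - 1))
      = ∏ p ∈ T, ((X p.2 - X p.1 : MvPolynomial ℕ ℤ) * ∑ l ∈ Finset.Icc p.1 p.2, X l) := by
    rw [gP_eq, map_prod, hTimg,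
      Finset.prod_image (fun a _ b _ h => by
        have h1 := congrArg Prod.fst h; have h2 := congrArg Prod.snd h
        simp only at h1 h2
        ext <;> omega)]
    apply Finset.prod_congr rfl
    intro p _
    rw [map_mul, map_sub, rename_X, rename_X, map_sum]
    congr 1
    rw [show Finset.Icc (p.1 + 1) (p.2 + 1)
        = (Finset.Icc p.1 p.2).map (addRightEmbedding 1) from
      (Finset.map_add_right_Icc _ _ _).symm, Finset.sum_map]
    apply Finset.sum_congr rfl
    intro l _
    rw [rename_X]
    rfl
  rw [h2, h3, h4, h5, h6, Finset.prod_mul_distrib, mul_assoc]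

end Aux

/-- The coefficient of `x_1^{k-1} x_2^0 x_3^2 ⋯ x_k^{2k-4}` in `f_k` is `(-1)^{k-1}`:
0-indexed, variable `0` has exponent `k-1` and variable `i ≥ 1` has exponent `2(i-1)`. -/
theorem fPoly_coeff (k : ℕ) (hk : 2 ≤ k) :
    MvPolynomial.coeff
      (Finsupp.equivFunOnFinite.symm fun i : Fin k =>
        if (i : ℕ) = 0 then k - 1 else 2 * ((i : ℕ) - 1))
      (fPoly k) = (-1) ^ (k - 1) := by
  classical
  have hinj1 : Function.Injective (· + 1 : ℕ → ℕ) := add_left_injective 1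
  set D := Finsupp.mapDomain (· + 1) (dd (k - 1)) with hD
  have hD0 : D 0 = 0 :=
    Finsupp.mapDomain_notin_range _ _ (by rintro ⟨a, ha⟩; exact Nat.succ_ne_zero a ha)
  have hDj : ∀ j : ℕ, 1 ≤ j → D j = dd (k-1) (j-1) := by
    intro j hj
    rw [hD, show j = (j-1) + 1 by omega, Finsupp.mapDomain_apply hinj1]
    simp
  have hmap : Finsupp.mapDomain Fin.val
      (Finsupp.equivFunOnFinite.symm fun i : Fin k =>
        if (i : ℕ) = 0 then k - 1 else 2 * ((i : ℕ) - 1))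
      = Finsupp.single 0 (k - 1) + D := by
    ext j
    rcases Nat.lt_or_ge j k with hj | hj
    · have hval : Finsupp.mapDomain Fin.val
          (Finsupp.equivFunOnFinite.symm fun i : Fin k =>
            if (i : ℕ) = 0 then k - 1 else 2 * ((i : ℕ) - 1)) j
          = if j = 0 then k - 1 else 2 * (j - 1) := by
        conv_lhs => rw [show j = Fin.val (⟨j, hj⟩ : Fin k) from rfl]
        rw [Finsupp.mapDomain_apply Fin.val_injective]
        simp
      rw [hval, Finsupp.add_apply, Finsupp.single_apply]
      rcases Nat.eq_zero_or_pos j with rfl | hj0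
      · simp [hD0]
      · rw [if_neg (by omega), if_neg (by omega : ¬ (0:ℕ) = j), hDj j hj0,
          dd_apply_lt _ _ (by omega), zero_add]
    · rw [Finsupp.mapDomain_notin_range _ _
        (by rintro ⟨a, rfl⟩; exact absurd a.isLt (by omega))]
      rw [Finsupp.add_apply, Finsupp.single_apply, if_neg (by omega : ¬ (0:ℕ) = j),
        hDj j (by omega), dd_apply_ge _ _ (by omega)]
      simp
  rw [← coeff_rename_mapDomain Fin.val Fin.val_injective (fPoly k), hmap, F_eq k hk,
    mul_comm (∏ j ∈ Finset.Ico 1 k, ((X j : MvPolynomial ℕ ℤ) - X 0))]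
  have hAhom : (∏ j ∈ Finset.Ico 1 k, ((X j : MvPolynomial ℕ ℤ) - X 0)).IsHomogeneous (k - 1) := by
    rw [show k - 1 = ∑ _j ∈ Finset.Ico 1 k, 1 by simp]
    exact IsHomogeneous.prod _ _ _
      (fun j _ => (isHomogeneous_X _ _).sub (isHomogeneous_X _ _))
  have hRavoid : ∀ a ∈ (rename (· + 1) (gP (k - 1))).support, a 0 = 0 := by
    intro a ha
    rw [MvPolynomial.mem_support_iff] at ha
    obtain ⟨u, hu, -⟩ := coeff_rename_ne_zero _ _ _ ha
    rw [← hu]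
    exact Finsupp.mapDomain_notin_range _ _ (by rintro ⟨b, hb⟩; exact Nat.succ_ne_zero b hb)
  rw [coeffA hD0 hRavoid hAhom]
  rw [hD, coeff_rename_mapDomain _ hinj1, coeff_gP, one_mul]
  have hA : coeff (Finsupp.single 0 (k - 1))
      (∏ j ∈ Finset.Ico 1 k, ((X j : MvPolynomial ℕ ℤ) - X 0)) = (-1) ^ (k - 1) := by
    have hsum : ∑ _j ∈ Finset.Ico 1 k, 1 = k - 1 := by simp
    conv_lhs => rw [← hsum]
    rw [coeffB (fun j _ => (isHomogeneous_X _ _).sub (isHomogeneous_X _ _))]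
    rw [Finset.prod_congr rfl (fun j hj => coeff_X_sub' 0 j
      (by simp only [Finset.mem_Ico] at hj; omega))]
    rw [Finset.prod_const, Nat.card_Ico]
  exact hA
end

section
/- Let n be a positive integer and p_1 its smallest prime divisor. If A ⊆ Z_n is a set such that no difference of two distinct elements of A is a zero-divisor in Z_n, then |A| ≤ p_1. Moreover, the set {1, 2, ..., p_1} ⊆ Z_n attains this bound: no two of its distinct elements differ by a zero-divisor. -/
/-- `z` is a zero-divisor in `ZMod n`. -/
def IsZeroDiv (n : ℕ) (z : ZMod n) : Prop :=
  z ≠ 0 ∧ ∃ w : ZMod n, w ≠ 0 ∧ z * w = 0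

lemma not_isZeroDiv_of_isUnit {n : ℕ} {z : ZMod n} (h : IsUnit z) : ¬ IsZeroDiv n z := by
  rintro ⟨hz, w, hw, hzw⟩
  obtain ⟨u, rfl⟩ := h
  apply hw
  calc w = ↑u⁻¹ * (↑u * w) := by rw [← mul_assoc]; simp
    _ = 0 := by rw [hzw, mul_zero]

lemma coprime_of_lt_minFac {n k : ℕ} (hn : 2 ≤ n) (hk : 0 < k) (h : k < n.minFac) :
    Nat.Coprime k n := by
  by_contra hc
  have h0 : Nat.gcd k n ≠ 0 := fun hg => by
    have := Nat.eq_zero_of_gcd_eq_zero_left hg; omega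
  have h2 : 2 ≤ Nat.gcd k n := by
    rcases Nat.lt_or_ge (Nat.gcd k n) 2 with h' | h'
    · exact absurd (by omega : Nat.gcd k n = 1) hc
    · exact h'
  have := Nat.minFac_le_of_dvd h2 (Nat.gcd_dvd_right k n)
  have := Nat.le_of_dvd hk (Nat.gcd_dvd_left k n)
  omega

lemma unit_of_sub {n : ℕ} (hn : 2 ≤ n) {a b : ℕ} (hb : 1 ≤ b) (hba : b < a)
    (ha : a ≤ n.minFac) : IsUnit ((a : ZMod n) - (b : ZMod n)) := by
  haveI : NeZero n := ⟨by omega⟩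
  have h1 : ((a - b : ℕ) : ZMod n) = (a : ZMod n) - b := by
    push_cast [Nat.cast_sub hba.le]; ring
  rw [← h1]
  rw [ZMod.isUnit_iff_coprime]
  exact coprime_of_lt_minFac hn (by omega) (by omega)

/-- If no two distinct elements of `A ⊆ Z_n` differ by a zero-divisor then `|A| ≤ p₁`, the
smallest prime divisor of `n`; moreover `{1, …, p₁}` attains this bound. -/
theorem card_le_minFac_of_no_zero_divisor_differences (n : ℕ) (hn : 2 ≤ n) :
    (∀ A : Finset (ZMod n),
      (∀ a ∈ A, ∀ b ∈ A, a ≠ b → ¬ IsZeroDiv n (a - b)) → A.card ≤ n.minFac) ∧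
    (∀ a ∈ Finset.Icc 1 n.minFac, ∀ b ∈ Finset.Icc 1 n.minFac, a ≠ b →
      ¬ IsZeroDiv n ((a : ZMod n) - (b : ZMod n))) := by
  haveI : NeZero n := ⟨by omega⟩
  set p := n.minFac with hp
  have hpprime : p.Prime := Nat.minFac_prime (by omega)
  have hpn : p ∣ n := Nat.minFac_dvd n
  haveI : NeZero p := ⟨hpprime.ne_zero⟩
  constructor
  · intro A hA
    have hle : A.card ≤ Fintype.card (ZMod p) := by
      apply Finset.card_le_card_of_injOn (fun z => ZMod.castHom hpn (ZMod p) z)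
        (fun _ _ => Finset.mem_univ _)
      intro a ha b hb hfab
      by_contra hab
      apply hA a ha b hb hab
      have hfab' : (ZMod.castHom hpn (ZMod p)) a = (ZMod.castHom hpn (ZMod p)) b := hfab
      have hsub : (ZMod.castHom hpn (ZMod p)) (a - b) = 0 := by
        rw [map_sub, hfab', sub_self]
      set z := a - b with hz
      have hz0 : z ≠ 0 := sub_ne_zero.mpr hab
      have hdvd : p ∣ z.val := by
        rw [ZMod.castHom_apply, ← ZMod.natCast_val, ZMod.natCast_eq_zero_iff] at hsub
        exact hsub
      obtain ⟨k, hk⟩ := hdvd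
      refine ⟨hz0, ((n / p : ℕ) : ZMod n), ?_, ?_⟩
      · rw [Ne, ZMod.natCast_eq_zero_iff]
        intro hdv
        have h1 : 0 < n / p := Nat.div_pos (Nat.minFac_le (by omega)) hpprime.pos
        have h2 : n / p < n := Nat.div_lt_self (by omega) hpprime.one_lt
        exact absurd (Nat.le_of_dvd h1 hdv) (by omega)
      · have : z = ((z.val : ℕ) : ZMod n) := (ZMod.natCast_rightInverse.injective (by simp [ZMod.val_natCast, Nat.mod_eq_of_lt (ZMod.val_lt z)])).symm
        rw [this, hk]
        push_cast
        rw [mul_assoc, mul_comm (k : ZMod n), ← mul_assoc, ← Nat.cast_mul,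
          Nat.mul_div_cancel' hpn]
        simp
    rwa [ZMod.card] at hle
  · intro a ha b hb hab
    simp only [Finset.mem_Icc] at ha hb
    rcases Nat.lt_or_gt_of_ne hab with h | h
    · intro hzd
      have hzd' : IsZeroDiv n ((b : ZMod n) - (a : ZMod n)) := by
        obtain ⟨h0, w, hw, hzw⟩ := hzd
        exact ⟨by simpa [neg_sub] using neg_ne_zero.mpr h0,
          w, hw, by rw [← neg_sub (a:ZMod n) b, neg_mul, hzw, neg_zero]⟩
      exact not_isZeroDiv_of_isUnit (unit_of_sub hn ha.1 h hb.2) hzd'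
    · exact not_isZeroDiv_of_isUnit (unit_of_sub hn hb.1 h ha.2)
end

section
/- Let d ≥ 1 and r > d, with (d, r) not in {(2,4), (2,5), (2,8)} and r = 3d. Then the sequence (d+1; 1, 3d, 2, 3d-1, 3, 3d-2, ..., d, 2d+1; d+2, 2d, d+3, 2d-1, ..., ⌈(3d+1)/2⌉) is a graceful permutation of length r = 3d whose sequence of absolute differences is (d; 3d-1, 3d-2, ..., d+1; d-1, d-2, ..., 1), and in particular begins with d. -/
/-- The sequence `(d+1; 1, 3d, 2, 3d-1, …, d, 2d+1; d+2, 2d, d+3, 2d-1, …)` (0-indexed). -/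
def threeDSeq (d : ℕ) : ℕ → ℤ := fun j =>
  if j = 0 then (d : ℤ) + 1
  else if j ≤ 2 * d then
    (if j % 2 = 1 then (((j + 1) / 2 : ℕ) : ℤ) else 3 * (d : ℤ) + 1 - ((j / 2 : ℕ) : ℤ))
  else
    (if (j - 2 * d) % 2 = 1 then (d : ℤ) + 1 + (((j - 2 * d + 1) / 2 : ℕ) : ℤ)
     else 2 * (d : ℤ) + 1 - (((j - 2 * d) / 2 : ℕ) : ℤ))

set_option maxHeartbeats 1000000 in
lemma threeDSeq_diff_formula (d i : ℕ) (hi : i + 1 < 3 * d) :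
    |threeDSeq d (i + 1) - threeDSeq d i| =
      (if i = 0 then (d : ℤ) else if i < 2 * d then 3 * (d : ℤ) - i
       else 3 * (d : ℤ) - 1 - i) := by
  have h := abs_cases (threeDSeq d (i + 1) - threeDSeq d i)
  simp only [threeDSeq] at h ⊢
  split_ifs at h ⊢ <;> first | omega | (exfalso; assumption)

set_option maxHeartbeats 1000000 in
lemma threeDSeq_image (d : ℕ) :
    (Finset.range (3 * d)).image (threeDSeq d) = Finset.Icc (1 : ℤ) ((3 * d : ℕ) : ℤ) := by
  ext v
  simp only [Finset.mem_image, Finset.mem_range, Finset.mem_Icc]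
  constructor
  · rintro ⟨j, hj, rfl⟩
    simp only [threeDSeq]
    split_ifs <;> constructor <;> omega
  · rintro ⟨h1, h2⟩
    lift v to ℕ using (by omega)
    have h2' : v ≤ 3 * d := by exact_mod_cast h2
    have h1' : 1 ≤ v := by exact_mod_cast h1
    by_cases c1 : v ≤ d
    · exact ⟨2 * v - 1, by omega, by simp only [threeDSeq]; split_ifs <;> omega⟩
    by_cases c2 : v = d + 1
    · exact ⟨0, by omega, by simp only [threeDSeq]; split_ifs <;> omega⟩
    by_cases c3 : v ≤ 2 * d ∧ 2 * v ≤ 3 * d + 2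
    · exact ⟨2 * v - 3, by omega, by simp only [threeDSeq]; split_ifs <;> omega⟩
    · exact ⟨6 * d + 2 - 2 * v, by omega, by simp only [threeDSeq]; split_ifs <;> omega⟩

/-- For `r = 3d` the sequence `threeDSeq d` is a graceful permutation of length `3d` whose
absolute differences are `(d; 3d-1, 3d-2, …, d+1; d-1, d-2, …, 1)`; in particular the first
absolute difference is `d`. -/
theorem threeDSeq_graceful (d r : ℕ) (hd : 1 ≤ d) (hr : d < r) (hr3 : r = 3 * d)
    (hexc : (d, r) ∉ ({(2, 4), (2, 5), (2, 8)} : Set (ℕ × ℕ))) :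
    IsGraceful r (threeDSeq d) ∧
    ∀ i, i + 1 < r →
      |threeDSeq d (i + 1) - threeDSeq d i| =
        (if i = 0 then (d : ℤ) else if i < 2 * d then 3 * (d : ℤ) - i
         else 3 * (d : ℤ) - 1 - i) := by
  subst hr3
  refine ⟨⟨threeDSeq_image d, ?_⟩, fun i hi => threeDSeq_diff_formula d i hi⟩
  intro i j hi hj h
  rw [threeDSeq_diff_formula d i hi, threeDSeq_diff_formula d j hj] at h
  split_ifs at h <;> omega
end

section
/- There is no graceful permutation (α_1, ..., α_r) of length r whose first absolute difference |α_2 - α_1| equals 2, for r ∈ {4, 5, 8}. -/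
/-- The list `[1, 2, …, r]` as integers. -/
def ilist (r : ℕ) : List ℤ := (List.range r).map (fun n => (n : ℤ) + 1)

/-- Depth-first search for an extension of a partial graceful sequence: `last` is the last
element placed so far, `ds` the absolute differences used so far, `rem` the remaining values. -/
def srch : ℕ → ℤ → List ℕ → List ℤ → Bool
  | 0, _, _, rem => rem.isEmpty
  | n+1, last, ds, rem =>
      rem.any fun x =>
        decide ((x - last).natAbs ∉ ds) && srch n x ((x - last).natAbs :: ds) (rem.erase x)

/-- `Good last ds l`: appending `l` after `last` uses pairwise distinct absolute differences,
none of which lies in `ds`. -/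
def Good : ℤ → List ℕ → List ℤ → Prop
  | _, _, [] => True
  | last, ds, x :: t => (x - last).natAbs ∉ ds ∧ Good x ((x - last).natAbs :: ds) t

lemma srch_complete : ∀ (l : List ℤ) (last : ℤ) (ds : List ℕ) (rem : List ℤ),
    l.Perm rem → Good last ds l → srch rem.length last ds rem = true := by
  intro l
  induction l with
  | nil =>
    intro last ds rem hperm _
    obtain rfl : rem = [] := hperm.symm.eq_nil
    rfl
  | cons x t ih =>
    intro last ds rem hperm hgood
    obtain ⟨hd, hg⟩ := hgood
    have hlen : rem.length = t.length + 1 := by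
      rw [← hperm.length_eq]; simp
    have hx : x ∈ rem := hperm.mem_iff.mp (by simp)
    have hperm' : t.Perm (rem.erase x) := by
      have := hperm.erase x
      simpa using this
    have hlen' : (rem.erase x).length = t.length := by rw [← hperm'.length_eq]
    rw [hlen, srch, List.any_eq_true]
    refine ⟨x, hx, ?_⟩
    rw [Bool.and_eq_true, decide_eq_true_iff]
    refine ⟨hd, ?_⟩
    have := ih x ((x - last).natAbs :: ds) (rem.erase x) hperm' hg
    rwa [hlen'] at this

lemma good_tail (r : ℕ) (α : ℕ → ℤ)
    (hinj : ∀ i j, i + 1 < r → j + 1 < r →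
      (α (i + 1) - α i).natAbs = (α (j + 1) - α j).natAbs → i = j) :
    ∀ n k, k + n + 1 = r →
      Good (α k) (((List.range k).map (fun i => (α (i + 1) - α i).natAbs)).reverse)
        ((List.range' (k + 1) n).map α) := by
  intro n
  induction n with
  | zero => intro k _; simp [Good]
  | succ n ih =>
    intro k hk
    rw [List.range'_succ, List.map_cons]
    refine ⟨?_, ?_⟩
    · simp only [List.mem_reverse, List.mem_map, List.mem_range]
      rintro ⟨i, hi, heq⟩
      have : i = k := hinj i k (by omega) (by omega) heq
      omega
    · have heq : (α (k + 1) - α k).natAbs ::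
          ((List.range k).map (fun i => (α (i + 1) - α i).natAbs)).reverse
          = ((List.range (k + 1)).map (fun i => (α (i + 1) - α i).natAbs)).reverse := by
        rw [List.range_succ, List.map_append, List.reverse_append]; rfl
      rw [heq]
      have := ih (k + 1) (by omega)
      simpa using this

lemma key (m : ℕ) (α : ℕ → ℤ) (hα : IsGraceful (m + 2) α)
    (hIcc : ((ilist (m + 2) : List ℤ) : Multiset ℤ)
      = (Finset.Icc (1 : ℤ) ((m + 2 : ℕ) : ℤ)).val)
    (hchk : ∀ a ∈ ilist (m + 2), ∀ b ∈ (ilist (m + 2)).erase a, (b - a).natAbs = 2 →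
      srch (((ilist (m + 2)).erase a).erase b).length b [2]
        (((ilist (m + 2)).erase a).erase b) = false)
    (h2 : |α 1 - α 0| = 2) : False := by
  obtain ⟨h1, hdist⟩ := hα
  set r := m + 2 with hr
  -- natAbs version of the first-difference hypothesis
  have h2' : (α 1 - α 0).natAbs = 2 := by
    have := h2
    rw [Int.abs_eq_natAbs] at this
    exact_mod_cast this
  -- natAbs version of distinctness
  have hinj : ∀ i j, i + 1 < r → j + 1 < r →
      (α (i + 1) - α i).natAbs = (α (j + 1) - α j).natAbs → i = j := by
    intro i j hi hj h
    refine hdist i j hi hj ?_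
    rw [Int.abs_eq_natAbs, Int.abs_eq_natAbs, h]
  -- the values of α on range r are a permutation of ilist r
  have hms : ((List.range r).map α : Multiset ℤ) = (Finset.Icc (1 : ℤ) (r : ℤ)).val := by
    have hcard : ((Finset.range r).image α).card = (Finset.range r).card := by
      rw [h1, Finset.card_range, Int.card_Icc]
      omega
    have hinjOn := Finset.injOn_of_card_image_eq hcard
    have himg := Finset.image_val_of_injOn hinjOn
    rw [h1] at himg
    rw [himg, Finset.range_val, Multiset.range, Multiset.map_coe]
  have hperm : ((List.range r).map α).Perm (ilist r) := by
    rw [← Multiset.coe_eq_coe, hms, hIcc]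
  -- split off the first two entries
  have hsplit : List.range r = 0 :: 1 :: List.range' 2 m := by
    rw [hr, List.range_eq_range']; rfl
  rw [hsplit, List.map_cons, List.map_cons] at hperm
  set tail : List ℤ := (List.range' 2 m).map α with htail
  -- memberships
  have hmema : α 0 ∈ ilist r := hperm.mem_iff.mp (by simp)
  have hpe1 : ((ilist r).erase (α 0)).Perm (α 1 :: tail) := by
    have := (hperm.symm).erase (α 0)
    rwa [List.erase_cons_head] at this
  have hmemb : α 1 ∈ (ilist r).erase (α 0) := hpe1.mem_iff.mpr (by simp)
  have hpe2 : (((ilist r).erase (α 0)).erase (α 1)).Perm tail := by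
    have := hpe1.erase (α 1)
    rwa [List.erase_cons_head] at this
  -- Goodness of the tail
  have hgood : Good (α 1) [2] tail := by
    have := good_tail r α hinj m 1 (by omega)
    have e : (List.map (fun i => (α (i + 1) - α i).natAbs) (List.range 1)).reverse = [2] := by
      rw [show List.range 1 = [0] from rfl, List.map_cons, List.map_nil, h2']; rfl
    rw [e] at this
    exact this
  -- search succeeds
  have htrue := srch_complete tail (α 1) [2] (((ilist r).erase (α 0)).erase (α 1))
    hpe2.symm hgood
  have hfalse := hchk (α 0) hmema (α 1) hmemb (by rwa [show α 1 - α 0 = α 1 - α 0 from rfl])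
  rw [htrue] at hfalse
  simp at hfalse

/-- For `r ∈ {4, 5, 8}` there is no graceful permutation of length `r` whose first absolute
difference equals `2`. -/
theorem no_graceful_first_diff_two (r : ℕ) (hr : r ∈ ({4, 5, 8} : Set ℕ))
    (α : ℕ → ℤ) (hα : IsGraceful r α) : |α 1 - α 0| ≠ 2 := by
  intro h2
  rcases hr with rfl | rfl | rfl
  · exact key 2 α hα (by decide) (by decide) h2
  · exact key 3 α hα (by decide) (by decide) h2
  · exact key 6 α hα (by decide) (by decide) h2
end

section
/- Let γ = (γ_1, ..., γ_ℓ) be a graceful permutation of length ℓ and let α = (α_1, ..., α_{2t}) be a graceful permutation of length 2t such that α_{2i-1} > t for all 1 ≤ i ≤ t and α_1 = γ_ℓ + t. Then the sequence (γ_1 + t, γ_2 + t, ..., γ_ℓ + t, α_1 + ℓ, α_2, α_3 + ℓ, α_4, ..., α_{2t-1} + ℓ, α_{2t}) is a graceful permutation of length ℓ + 2t. -/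
/-- Concatenation construction: if `γ` is graceful of length `ℓ` and `α` is graceful of
length `2t` with all odd-position (1-indexed) entries `> t` and `α_1 = γ_ℓ + t`, then
`(γ_1 + t, …, γ_ℓ + t, α_1 + ℓ, α_2, α_3 + ℓ, α_4, …, α_{2t-1} + ℓ, α_{2t})` is graceful of
length `ℓ + 2t`. -/
theorem graceful_concat (ℓ t : ℕ) (hℓ : 1 ≤ ℓ) (ht : 1 ≤ t)
    (γ α : ℕ → ℤ) (hγ : IsGraceful ℓ γ) (hα : IsGraceful (2 * t) α)
    (hodd : ∀ i < t, (t : ℤ) < α (2 * i))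
    (hfirst : α 0 = γ (ℓ - 1) + t) :
    IsGraceful (ℓ + 2 * t)
      (fun j => if j < ℓ then γ j + t
        else if (j - ℓ) % 2 = 0 then α (j - ℓ) + ℓ else α (j - ℓ)) := by
  obtain ⟨hγim, hγd⟩ := hγ
  obtain ⟨hαim, hαd⟩ := hα
  have cardIcc : ∀ m : ℕ, (Finset.Icc (1:ℤ) (m:ℤ)).card = m := by
    intro m; rw [Int.card_Icc]; omega
  have hγmem : ∀ i, i < ℓ → 1 ≤ γ i ∧ γ i ≤ (ℓ:ℤ) := by
    intro i hi
    have : γ i ∈ Finset.Icc (1:ℤ) (ℓ:ℤ) := by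
      rw [← hγim]; exact Finset.mem_image_of_mem _ (Finset.mem_range.mpr hi)
    rwa [Finset.mem_Icc] at this
  have hαmem : ∀ i, i < 2*t → 1 ≤ α i ∧ α i ≤ 2*(t:ℤ) := by
    intro i hi
    have : α i ∈ Finset.Icc (1:ℤ) ((2*t : ℕ):ℤ) := by
      rw [← hαim]; exact Finset.mem_image_of_mem _ (Finset.mem_range.mpr hi)
    rw [Finset.mem_Icc] at this
    push_cast at this
    exact this
  have hγinj : ∀ i, i < ℓ → ∀ j, j < ℓ → γ i = γ j → i = j := by
    have h : Set.InjOn γ (Finset.range ℓ) := by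
      apply Finset.injOn_of_card_image_eq
      rw [hγim, cardIcc, Finset.card_range]
    intro i hi j hj hij
    exact h (Finset.mem_coe.mpr (Finset.mem_range.mpr hi))
      (Finset.mem_coe.mpr (Finset.mem_range.mpr hj)) hij
  have hαinj : ∀ i, i < 2*t → ∀ j, j < 2*t → α i = α j → i = j := by
    have h : Set.InjOn α (Finset.range (2*t)) := by
      apply Finset.injOn_of_card_image_eq
      rw [hαim, cardIcc, Finset.card_range]
    intro i hi j hj hij
    exact h (Finset.mem_coe.mpr (Finset.mem_range.mpr hi))
      (Finset.mem_coe.mpr (Finset.mem_range.mpr hj)) hij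
  -- the even-position values of α are exactly {t+1, ..., 2t}
  have hEvenSet : (Finset.range t).image (fun i => α (2*i)) = Finset.Icc ((t:ℤ)+1) (2*(t:ℤ)) := by
    apply Finset.eq_of_subset_of_card_le
    · intro x hx
      obtain ⟨i, hi, rfl⟩ := Finset.mem_image.mp hx
      rw [Finset.mem_range] at hi
      have h1 := hodd i hi
      have h2 := (hαmem (2*i) (by omega)).2
      exact Finset.mem_Icc.mpr ⟨by omega, h2⟩
    · rw [Finset.card_image_of_injOn, Finset.card_range]
      · rw [Int.card_Icc]; omega
      · intro i hi j hj hij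
        simp only [Finset.mem_coe, Finset.mem_range] at hi hj
        have := hαinj (2*i) (by omega) (2*j) (by omega) hij
        omega
  have hαOdd : ∀ k, k < 2*t → k % 2 = 1 → α k ≤ (t:ℤ) := by
    intro k hk hk2
    by_contra h
    have hmem : α k ∈ Finset.Icc ((t:ℤ)+1) (2*(t:ℤ)) :=
      Finset.mem_Icc.mpr ⟨by omega, (hαmem k hk).2⟩
    rw [← hEvenSet] at hmem
    obtain ⟨i, hi, hik⟩ := Finset.mem_image.mp hmem
    rw [Finset.mem_range] at hi
    have := hαinj (2*i) (by omega) k hk hik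
    omega
  have hαEven : ∀ k, k < 2*t → k % 2 = 0 → (t:ℤ) < α k := by
    intro k hk hk2
    have hk' : k = 2 * (k/2) := by omega
    rw [hk']
    exact hodd _ (by omega)
  unfold IsGraceful
  set β : ℕ → ℤ := fun j => if j < ℓ then γ j + t
        else if (j - ℓ) % 2 = 0 then α (j - ℓ) + ℓ else α (j - ℓ) with hβ
  have hβlt : ∀ j, j < ℓ → β j = γ j + t := by
    intro j hj; simp only [hβ]; rw [if_pos hj]
  have hβge : ∀ k, β (ℓ + k) = if k % 2 = 0 then α k + ℓ else α k := by
    intro k; simp only [hβ]; rw [if_neg (by omega), Nat.add_sub_cancel_left]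
  have hb1 : ∀ j, j < ℓ → (t:ℤ)+1 ≤ β j ∧ β j ≤ (t:ℤ) + ℓ := by
    intro j hj; rw [hβlt j hj]; have := hγmem j hj; omega
  have hb2 : ∀ k, k < 2*t → k % 2 = 0 → (t:ℤ)+ℓ+1 ≤ β (ℓ+k) ∧ β (ℓ+k) ≤ 2*(t:ℤ)+ℓ := by
    intro k hk h2; rw [hβge k, if_pos h2]
    have h3 := hαEven k hk h2
    have h4 := (hαmem k hk).2
    omega
  have hb3 : ∀ k, k < 2*t → k % 2 = 1 → (1:ℤ) ≤ β (ℓ+k) ∧ β (ℓ+k) ≤ (t:ℤ) := by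
    intro k hk h2; rw [hβge k, if_neg (by omega)]
    have h3 := hαOdd k hk h2
    have h4 := (hαmem k hk).1
    omega
  have hβinj : ∀ i, i < ℓ+2*t → ∀ j, j < ℓ+2*t → β i = β j → i = j := by
    have key : ∀ i, i < ℓ → ∀ j, ¬ j < ℓ → j < ℓ+2*t → β i ≠ β j := by
      intro i hi j hj hj' heq
      obtain ⟨m, rfl⟩ : ∃ m, j = ℓ + m := ⟨j - ℓ, by omega⟩
      have hm : m < 2*t := by omega
      have b1 := hb1 i hi
      rcases Nat.mod_two_eq_zero_or_one m with hm2 | hm2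
      · have := hb2 m hm hm2; omega
      · have := hb3 m hm hm2; omega
    intro i hi j hj heq
    by_cases h1 : i < ℓ <;> by_cases h2 : j < ℓ
    · rw [hβlt i h1, hβlt j h2] at heq
      exact hγinj i h1 j h2 (by omega)
    · exact absurd heq (key i h1 j h2 hj)
    · exact absurd heq.symm (key j h2 i h1 hi)
    · obtain ⟨k, rfl⟩ : ∃ k, i = ℓ + k := ⟨i - ℓ, by omega⟩
      obtain ⟨m, rfl⟩ : ∃ m, j = ℓ + m := ⟨j - ℓ, by omega⟩
      have hk : k < 2*t := by omega
      have hm : m < 2*t := by omega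
      rw [hβge k, hβge m] at heq
      rcases Nat.mod_two_eq_zero_or_one k with hk2 | hk2 <;>
        rcases Nat.mod_two_eq_zero_or_one m with hm2 | hm2
      · rw [if_pos hk2, if_pos hm2] at heq
        have := hαinj k hk m hm (by omega)
        omega
      · rw [if_pos hk2, if_neg (by omega)] at heq
        have := hαEven k hk hk2
        have := hαOdd m hm hm2
        omega
      · rw [if_neg (by omega), if_pos hm2] at heq
        have := hαOdd k hk hk2
        have := hαEven m hm hm2
        omega
      · rw [if_neg (by omega), if_neg (by omega)] at heq
        have := hαinj k hk m hm heq
        omega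
  constructor
  · apply Finset.eq_of_subset_of_card_le
    · intro x hx
      obtain ⟨j, hj, rfl⟩ := Finset.mem_image.mp hx
      rw [Finset.mem_range] at hj
      rw [Finset.mem_Icc]
      push_cast
      by_cases h1 : j < ℓ
      · have := hb1 j h1; constructor <;> omega
      · obtain ⟨k, rfl⟩ : ∃ k, j = ℓ + k := ⟨j - ℓ, by omega⟩
        have hk : k < 2*t := by omega
        rcases Nat.mod_two_eq_zero_or_one k with hk2 | hk2
        · have := hb2 k hk hk2; constructor <;> omega
        · have := hb3 k hk hk2; constructor <;> omega
    · have hc : ((Finset.range (ℓ+2*t)).image β).card = ℓ+2*t := by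
        rw [Finset.card_image_of_injOn, Finset.card_range]
        intro a ha b hb
        simp only [Finset.mem_coe, Finset.mem_range] at ha hb
        exact hβinj a ha b hb
      rw [cardIcc, hc]
  · -- difference facts
    have hEγ : ∀ i, i + 1 < ℓ → β (i+1) - β i = γ (i+1) - γ i := by
      intro i hi; rw [hβlt (i+1) hi, hβlt i (by omega)]; ring
    have hAbsγ : ∀ i, i + 1 < ℓ → 1 ≤ |β (i+1) - β i| ∧ |β (i+1) - β i| ≤ (ℓ:ℤ) - 1 := by
      intro i hi
      rw [hEγ i hi]
      have h1 := hγmem (i+1) hi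
      have h2 := hγmem i (by omega)
      have hne : γ (i+1) ≠ γ i := by
        intro h; have := hγinj (i+1) hi i (by omega) h; omega
      rcases abs_cases (γ (i+1) - γ i) with ⟨ha, hb⟩ | ⟨ha, hb⟩ <;> rw [ha] <;> omega
    have hJ : |β (ℓ - 1 + 1) - β (ℓ - 1)| = (ℓ:ℤ) := by
      have eℓ : ℓ - 1 + 1 = ℓ := by omega
      have e0 : β ℓ = α 0 + ℓ := by
        have := hβge 0; simpa using this
      rw [eℓ, e0, hβlt (ℓ-1) (by omega), hfirst]
      have e : γ (ℓ-1) + (t:ℤ) + ℓ - (γ (ℓ-1) + t) = (ℓ:ℤ) := by ring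
      rw [e, abs_of_nonneg (by positivity)]
    have hAbsα : ∀ k, k + 1 < 2*t →
        |β (ℓ + k + 1) - β (ℓ + k)| = (ℓ:ℤ) + |α (k+1) - α k| := by
      intro k hk
      have e : ℓ + k + 1 = ℓ + (k+1) := by omega
      rw [e, hβge (k+1), hβge k]
      rcases Nat.mod_two_eq_zero_or_one k with h2 | h2
      · rw [if_pos h2, if_neg (by omega)]
        have hE := hαEven k (by omega) h2
        have hO := hαOdd (k+1) (by omega) (by omega)
        have ha : α (k+1) - (α k + ℓ) < 0 := by omega
        have hb : α (k+1) - α k < 0 := by omega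
        rw [abs_of_neg ha, abs_of_neg hb]; ring
      · rw [if_pos (show (k+1) % 2 = 0 by omega), if_neg (show ¬ k % 2 = 0 by omega)]
        have hO := hαOdd k (by omega) h2
        have hE := hαEven (k+1) (by omega) (by omega)
        have ha : 0 ≤ α (k+1) + ℓ - α k := by omega
        have hb : 0 ≤ α (k+1) - α k := by omega
        rw [abs_of_nonneg ha, abs_of_nonneg hb]; ring
    have hα1 : ∀ k, k + 1 < 2*t → 1 ≤ |α (k+1) - α k| := by
      intro k hk
      have hne : α (k+1) ≠ α k := by
        intro h; have := hαinj (k+1) (by omega) k (by omega) h; omega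
      rcases abs_cases (α (k+1) - α k) with ⟨ha,_⟩ | ⟨ha,_⟩ <;> rw [ha] <;> omega
    have tri : ∀ i, i + 1 < ℓ + 2*t →
        i + 1 < ℓ ∨ i = ℓ - 1 ∨ ∃ k, i = ℓ + k ∧ k + 1 < 2*t := by
      intro i hi
      by_cases h : i + 1 < ℓ
      · exact Or.inl h
      · by_cases h' : i < ℓ
        · exact Or.inr (Or.inl (by omega))
        · exact Or.inr (Or.inr ⟨i - ℓ, by omega, by omega⟩)
    intro i j hi hj heq
    rcases tri i hi with hiA | hiB | ⟨k, rfl, hk⟩ <;>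
      rcases tri j hj with hjA | hjB | ⟨m, hm, hm2⟩
    · rw [hEγ i hiA, hEγ j hjA] at heq
      exact hγd i j hiA hjA heq
    · subst hjB
      rw [hJ] at heq
      have := hAbsγ i hiA
      omega
    · subst hm
      rw [hAbsα m hm2] at heq
      have h1 := hAbsγ i hiA
      have h2 := hα1 m hm2
      omega
    · subst hiB
      rw [hJ] at heq
      have := hAbsγ j hjA
      omega
    · omega
    · subst hiB hm
      rw [hJ, hAbsα m hm2] at heq
      have := hα1 m hm2
      omega
    · rw [hAbsα k hk] at heq
      have h1 := hAbsγ j hjA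
      have h2 := hα1 k hk
      omega
    · subst hjB
      rw [hAbsα k hk, hJ] at heq
      have := hα1 k hk
      omega
    · subst hm
      rw [hAbsα k hk, hAbsα m hm2] at heq
      have h3 : |α (k+1) - α k| = |α (m+1) - α m| := by omega
      have := hαd k m (by omega) (by omega) h3
      omega
end
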